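/- arXiv:1501.07301 — 16 statements merged into one kernel-verified Lean document; each statement's English description precedes it below -/
import Mathlib

section
/- Let A be a set of nonnegative integers that is closed under addition. Then the complement ℤ₊ \ A is infinite if and only if there exists an integer u > 1 such that every element of A is divisible by u (i.e., A ⊆ uℤ). -/
/-- Let `A` be a set of nonnegative integers closed under addition. The complement
`ℤ₊ \ A` is infinite iff `A ⊆ uℤ` for some integer `u > 1`. -/
theorem stmt0 (A : Set ℤ) (hpos : ∀ a ∈ A, 0 ≤ a)
    (hadd : ∀ a ∈ A, ∀ b ∈ A, a + b ∈ A) :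
    {z : ℤ | 0 ≤ z ∧ z ∉ A}.Infinite ↔ ∃ u : ℤ, 1 < u ∧ ∀ a ∈ A, u ∣ a := by
  constructor
  · intro hinf
    by_contra hu
    push_neg at hu
    -- membership in the submonoid closure means in A or zero
    have hMA : ∀ x ∈ AddSubmonoid.closure A, x ∈ A ∨ x = 0 := by
      intro x hx
      induction hx using AddSubmonoid.closure_induction with
      | mem y hy => exact Or.inl hy
      | zero => exact Or.inr rfl
      | add x y hx hy ihx ihy =>
        rcases ihx with h1 | h1 <;> rcases ihy with h2 | h2
        · exact Or.inl (hadd x h1 y h2)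
        · subst h2; simpa using Or.inl h1
        · subst h1; simpa using Or.inl h2
        · subst h1; subst h2; exact Or.inr (by simp)
    have hMnn : ∀ x ∈ AddSubmonoid.closure A, 0 ≤ x := fun x hx =>
      (hMA x hx).elim (hpos x) (fun h => by rw [h])
    obtain ⟨g, hg⟩ := Int.subgroup_cyclic (AddSubgroup.closure A)
    have hgdvd : ∀ a ∈ A, g ∣ a := by
      intro a ha
      have h : a ∈ AddSubgroup.closure A := AddSubgroup.subset_closure ha
      rw [hg, AddSubgroup.mem_closure_singleton] at h
      obtain ⟨n, hn⟩ := h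
      exact ⟨n, by rw [← hn, zsmul_eq_mul]; push_cast; ring⟩
    have hg0 : g ≠ 0 := by
      intro h0
      obtain ⟨a, ha, hna⟩ := hu 2 one_lt_two
      have := hgdvd a ha
      rw [h0] at this
      obtain rfl := zero_dvd_iff.mp this
      exact hna (dvd_zero 2)
    have habs : |g| = 1 := by
      rcases lt_or_ge 1 |g| with h | h
      · obtain ⟨a, ha, hna⟩ := hu |g| h
        exact absurd ((abs_dvd g a).mpr (hgdvd a ha)) hna
      · have := abs_pos.mpr hg0
        omega
    have h1 : (1:ℤ) ∈ AddSubgroup.closure A := by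
      rw [hg, AddSubgroup.mem_closure_singleton]
      refine ⟨g, ?_⟩
      rcases (abs_eq (by norm_num : (0:ℤ) ≤ 1)).mp habs with h | h <;> rw [h] <;> norm_num
    -- decompose 1 = p - q with p, q in the submonoid closure
    have h1' : (1:ℤ) ∈ AddSubmonoid.closure (A ∪ -A) := by
      rw [← AddSubgroup.closure_toAddSubmonoid]
      exact h1
    rw [AddSubmonoid.closure_union, AddSubmonoid.mem_sup] at h1'
    obtain ⟨p, hp, m, hm, hpm⟩ := h1'
    rw [AddSubmonoid.closure_neg] at hm
    set q : ℤ := -m with hqdef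
    have hqM : q ∈ AddSubmonoid.closure A := by
      rwa [AddSubmonoid.mem_neg] at hm
    have hpq : p = q + 1 := by omega
    have hq0 : 0 ≤ q := hMnn q hqM
    obtain ⟨N, hN1, keyA⟩ : ∃ N : ℤ, 1 ≤ N ∧ ∀ z, N ≤ z → z ∈ A := by
      have toA : ∀ z : ℤ, 1 ≤ z → z ∈ AddSubmonoid.closure A → z ∈ A := by
        intro z hz1 hzM
        rcases hMA z hzM with h | h
        · exact h
        · omega
      by_cases hq : q = 0
      · refine ⟨1, le_refl 1, fun z hz => ?_⟩
        have hp1 : p = 1 := by omega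
        have : z.toNat • p ∈ AddSubmonoid.closure A := AddSubmonoid.nsmul_mem _ hp _
        rw [nsmul_eq_mul, hp1, mul_one] at this
        rw [Int.toNat_of_nonneg (by omega)] at this
        exact toA z hz this
      · have hqpos : 0 < q := lt_of_le_of_ne hq0 (Ne.symm hq)
        refine ⟨q * q, by nlinarith, fun z hz => ?_⟩
        set r := z % q with hr
        set a := z / q with ha
        have hr0 : 0 ≤ r := Int.emod_nonneg z (ne_of_gt hqpos)
        have hrq : r < q := Int.emod_lt_of_pos z hqpos
        have hza : z = q * a + r := (Int.mul_ediv_add_emod z q).symm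
        have hqa : q ≤ a := by
          rw [ha, Int.le_ediv_iff_mul_le hqpos]
          exact hz
        have har : r ≤ a := by omega
        have hmem : (a - r).toNat • q + r.toNat • p ∈ AddSubmonoid.closure A :=
          AddSubmonoid.add_mem _ (AddSubmonoid.nsmul_mem _ hqM _)
            (AddSubmonoid.nsmul_mem _ hp _)
        rw [nsmul_eq_mul, nsmul_eq_mul, Int.toNat_of_nonneg (by omega),
          Int.toNat_of_nonneg hr0, hpq] at hmem
        have heq : (a - r) * q + r * (q + 1) = z := by rw [hza]; ring
        rw [heq] at hmem
        exact toA z (by nlinarith) hmem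
    have hfin : {z : ℤ | 0 ≤ z ∧ z ∉ A}.Finite := by
      apply (Set.finite_Icc 0 N).subset
      intro z hz
      simp only [Set.mem_setOf_eq] at hz
      refine ⟨hz.1, ?_⟩
      by_contra h
      push_neg at h
      exact hz.2 (keyA z (by omega))
    exact hinf hfin
  · rintro ⟨u, hu1, hdvd⟩
    have h0 : (0:ℤ) < u := by linarith
    refine Set.infinite_of_injective_forall_mem (f := fun n : ℕ => u * n + 1) ?_ ?_
    · intro a b hab
      have hab' : u * (a:ℤ) = u * b := by dsimp at hab; linarith
      have := mul_left_cancel₀ (ne_of_gt h0) hab'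
      exact_mod_cast this
    · intro n
      refine ⟨by have hn : (0:ℤ) ≤ (n:ℤ) := Int.natCast_nonneg n; nlinarith, fun hmem => ?_⟩
      have hd : u ∣ u * n + 1 := hdvd _ hmem
      have : u ∣ 1 := (dvd_add_right (dvd_mul_right u (n:ℤ))).mp hd
      have := Int.le_of_dvd one_pos this
      linarith
end

section
/- Let p(X₁,…,Xₙ) = a₁X₁ + ⋯ + aₙXₙ (with n ≥ 1) be a homogeneous linear pattern admitted by ℤ₊, and let I be an ideal of a numerical semigroup S. Then p(I) is an ideal of some numerical semigroup if and only if gcd(a₁,…,aₙ) = 1. -/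
open Finset

/-- A numerical semigroup: a set of nonnegative integers containing 0, closed under
addition, with finite complement in ℤ₊. -/
def IsNumericalSemigroup (S : Set ℤ) : Prop :=
  (0 : ℤ) ∈ S ∧ (∀ s ∈ S, 0 ≤ s) ∧ (∀ a ∈ S, ∀ b ∈ S, a + b ∈ S) ∧
    {z : ℤ | 0 ≤ z ∧ z ∉ S}.Finite

/-- An ideal of a numerical semigroup `S`: a nonempty subset `I ⊆ S` with `I + S ⊆ I`. -/
def IsIdealOf (I S : Set ℤ) : Prop :=
  I.Nonempty ∧ I ⊆ S ∧ ∀ x ∈ I, ∀ s ∈ S, x + s ∈ I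

/-- The image of the set `A` under the linear pattern `a₁X₁+⋯+aₙXₙ+a₀`:
values on non-increasing sequences of elements of `A`. -/
def patternImage {n : ℕ} (a : Fin n → ℤ) (a₀ : ℤ) (A : Set ℤ) : Set ℤ :=
  {y : ℤ | ∃ s : Fin n → ℤ, Antitone s ∧ (∀ i, s i ∈ A) ∧ y = ∑ i, a i * s i + a₀}

/-- The linear pattern `a₁X₁+⋯+aₙXₙ+a₀` is admitted by the ideal `I` with codomain `S`:
on every non-increasing sequence of elements of `I` it takes a value in `S`. -/
def AdmittedBy {n : ℕ} (a : Fin n → ℤ) (a₀ : ℤ) (I S : Set ℤ) : Prop :=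
  ∀ s : Fin n → ℤ, Antitone s → (∀ i, s i ∈ I) → ∑ i, a i * s i + a₀ ∈ S

/-- A linear pattern is premonic if some initial partial sum of its coefficients equals 1. -/
def Premonic {n : ℕ} (a : Fin n → ℤ) : Prop :=
  ∃ k : ℕ, 1 ≤ k ∧ k ≤ n ∧
    ∑ i ∈ Finset.univ.filter (fun i : Fin n => (i : ℕ) < k), a i = 1

private lemma int_bezout (s : Finset ℕ) (f : ℕ → ℤ) :
    ∃ x : ℕ → ℤ, ∑ k ∈ s, x k * f k = s.gcd f := by
  classical
  induction s using Finset.induction_on with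
  | empty => exact ⟨0, by simp⟩
  | @insert a s ha ih =>
    obtain ⟨x, hx⟩ := ih
    refine ⟨Function.update (fun k => Int.gcdB (f a) (s.gcd f) * x k) a
      (Int.gcdA (f a) (s.gcd f)), ?_⟩
    rw [Finset.sum_insert ha, Finset.gcd_insert]
    have hg : GCDMonoid.gcd (f a) (s.gcd f)
        = f a * Int.gcdA (f a) (s.gcd f) + s.gcd f * Int.gcdB (f a) (s.gcd f) := by
      rw [← Int.coe_gcd, Int.gcd_eq_gcd_ab]
    have hsum : ∑ k ∈ s, Function.update (fun k => Int.gcdB (f a) (s.gcd f) * x k) a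
        (Int.gcdA (f a) (s.gcd f)) k * f k
        = Int.gcdB (f a) (s.gcd f) * ∑ k ∈ s, x k * f k := by
      rw [Finset.mul_sum]
      refine Finset.sum_congr rfl fun k hk => ?_
      rw [Function.update_of_ne (by rintro rfl; exact ha hk)]
      ring
    rw [hsum, hx, Function.update_self, hg]
    ring

/-- If the homogeneous linear pattern `a₁X₁+⋯+aₙXₙ` is admitted by ℤ₊ and `I` is an
ideal of a numerical semigroup `S`, then `p(I)` is an ideal of some numerical
semigroup iff `gcd(a₁,…,aₙ) = 1`. -/
theorem stmt1 {n : ℕ} (hn : 0 < n) (a : Fin n → ℤ)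
    (hadm : ∀ s : Fin n → ℤ, Antitone s → (∀ i, 0 ≤ s i) → 0 ≤ ∑ i, a i * s i)
    (S I : Set ℤ) (hS : IsNumericalSemigroup S) (hI : IsIdealOf I S) :
    (∃ T : Set ℤ, IsNumericalSemigroup T ∧ IsIdealOf (patternImage a 0 I) T) ↔
      Finset.univ.gcd a = 1 := by
  classical
  set A : ℕ → ℤ := fun k => ∑ i ∈ Finset.univ.filter (fun i : Fin n => (i : ℕ) < k), a i
    with hA_def
  -- partial sums are nonnegative
  have hA_nonneg : ∀ k, 0 ≤ A k := by
    intro k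
    have := hadm (fun i => if (i : ℕ) < k then 1 else 0)
      (by
        intro i j hij
        have : (i : ℕ) ≤ (j : ℕ) := hij
        dsimp only
        split_ifs <;> omega)
      (by intro i; split_ifs <;> norm_num)
    simpa [hA_def, Finset.sum_filter, mul_ite] using this
  -- difference of partial sums
  have hAdiff : ∀ i : Fin n, A ((i : ℕ) + 1) - A (i : ℕ) = a i := by
    intro i
    have hset : Finset.univ.filter (fun j : Fin n => (j : ℕ) < (i : ℕ) + 1)
        = insert i (Finset.univ.filter (fun j : Fin n => (j : ℕ) < (i : ℕ))) := by
      ext j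
      simp only [Finset.mem_filter, Finset.mem_univ, true_and, Finset.mem_insert,
        Fin.ext_iff]
      omega
    rw [hA_def]
    simp only [hset]
    rw [Finset.sum_insert (by simp)]
    ring
  -- elements of the pattern image are nonnegative
  have pI_nonneg : ∀ y ∈ patternImage a 0 I, 0 ≤ y := by
    rintro y ⟨s, hs, hsI, rfl⟩
    have := hadm s hs (fun i => hS.2.1 _ (hI.2.1 (hsI i)))
    simpa using this
  -- image is nonempty
  have pI_ne : (patternImage a 0 I).Nonempty := by
    obtain ⟨x₀, hx₀⟩ := hI.1
    exact ⟨∑ i, a i * x₀ + 0, fun _ => x₀, antitone_const, fun _ => hx₀, rfl⟩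
  -- image is closed under addition
  have pI_add : ∀ y ∈ patternImage a 0 I, ∀ z ∈ patternImage a 0 I,
      y + z ∈ patternImage a 0 I := by
    rintro y ⟨s, hs, hsI, rfl⟩ z ⟨s', hs', hs'I, rfl⟩
    refine ⟨fun i => s i + s' i, hs.add hs',
      fun i => hI.2.2 _ (hsI i) _ (hI.2.1 (hs'I i)), ?_⟩
    simp [mul_add, Finset.sum_add_distrib]
  constructor
  · rintro ⟨T, hT, hTid⟩
    obtain ⟨x, hx⟩ := hTid.1
    set d := Finset.univ.gcd a with hd_def
    have hdvd : ∀ y ∈ patternImage a 0 I, d ∣ y := by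
      rintro y ⟨s, hs, hsI, rfl⟩
      refine dvd_add (Finset.dvd_sum fun i _ => ?_) (dvd_zero d)
      exact Dvd.dvd.mul_right (Finset.gcd_dvd (Finset.mem_univ i)) _
    obtain ⟨B, hB⟩ := hT.2.2.2.bddAbove
    have hTmem : ∀ z : ℤ, max B 0 + 1 ≤ z → z ∈ T := by
      intro z hz
      by_contra h
      have h1 : z ∈ {z : ℤ | 0 ≤ z ∧ z ∉ T} := ⟨by
        have := le_max_right B (0:ℤ); omega, h⟩
      have h2 := hB h1
      have := le_max_left B (0:ℤ)
      omega
    set M := max B 0 + 1 with hM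
    have h1 : x + M ∈ patternImage a 0 I := hTid.2.2 x hx M (hTmem M le_rfl)
    have h2 : x + (M + 1) ∈ patternImage a 0 I :=
      hTid.2.2 x hx (M + 1) (hTmem _ (by omega))
    have hd1 : d ∣ 1 := by
      have hsub : d ∣ (x + (M + 1)) - (x + M) := dvd_sub (hdvd _ h2) (hdvd _ h1)
      have : (x + (M + 1)) - (x + M) = 1 := by ring
      rwa [this] at hsub
    have hdnn : 0 ≤ d := by
      have h := Finset.normalize_gcd (s := (Finset.univ : Finset (Fin n))) (f := a)
      rw [← Int.abs_eq_normalize] at h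
      rw [hd_def, ← h]
      exact abs_nonneg _
    rcases Int.isUnit_iff.mp (isUnit_of_dvd_one hd1) with h | h <;> omega
  · intro hgcd
    -- bound for S: all integers ≥ G lie in S
    obtain ⟨BS, hBS⟩ := hS.2.2.2.bddAbove
    set G : ℤ := max BS 0 + 1 with hG_def
    have hG : ∀ z : ℤ, G ≤ z → z ∈ S := by
      intro z hz
      by_contra h
      have h1 : z ∈ {z : ℤ | 0 ≤ z ∧ z ∉ S} := ⟨by
        have := le_max_right BS (0:ℤ); omega, h⟩
      have h2 := hBS h1
      have := le_max_left BS (0:ℤ)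
      omega
    have hG1 : 1 ≤ G := by have := le_max_right BS (0:ℤ); omega
    -- gcd of the partial sums is 1
    set g := (Finset.range n).gcd (fun k => A (k + 1)) with hg_def
    have hgA : g = 1 := by
      have hga : ∀ i : Fin n, g ∣ a i := by
        intro i
        have h1 : g ∣ A ((i : ℕ) + 1) :=
          Finset.gcd_dvd (Finset.mem_range.mpr i.isLt)
        have h2 : g ∣ A (i : ℕ) := by
          rcases Nat.eq_zero_or_eq_succ_pred (i : ℕ) with h | h
          · rw [h]
            have : A 0 = 0 := by simp [hA_def]
            rw [this]
            exact dvd_zero g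
          · rw [h]
            exact Finset.gcd_dvd (Finset.mem_range.mpr (by omega))
        have := dvd_sub h1 h2
        rwa [hAdiff i] at this
      have hdg : g ∣ Finset.univ.gcd a := Finset.dvd_gcd fun i _ => hga i
      rw [hgcd] at hdg
      have hgnn : 0 ≤ g := by
        have h := Finset.normalize_gcd (s := Finset.range n) (f := fun k => A (k + 1))
        rw [← Int.abs_eq_normalize] at h
        rw [hg_def, ← h]
        exact abs_nonneg _
      rcases Int.isUnit_iff.mp (isUnit_of_dvd_one hdg) with h | h <;> omega
    -- there is a positive partial sum
    have hex : ((Finset.range n).filter (fun k => 0 < A (k + 1))).Nonempty := by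
      rw [Finset.filter_nonempty_iff]
      by_contra h
      push_neg at h
      have hz : ∀ k ∈ Finset.range n, A (k + 1) = 0 := fun k hk =>
        le_antisymm (h k hk) (hA_nonneg _)
      have := Finset.gcd_eq_zero_iff.mpr hz
      rw [← hg_def, hgA] at this
      exact one_ne_zero this
    set k0 := ((Finset.range n).filter (fun k => 0 < A (k + 1))).max' hex with hk0_def
    have hk0mem := ((Finset.range n).filter (fun k => 0 < A (k + 1))).max'_mem hex
    rw [Finset.mem_filter, Finset.mem_range] at hk0mem
    obtain ⟨hk0n, hq⟩ := hk0mem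
    have hk0max : ∀ k, k < n → 0 < A (k + 1) → k ≤ k0 :=
      fun k hk hA' => Finset.le_max' _ k (Finset.mem_filter.mpr
        ⟨Finset.mem_range.mpr hk, hA'⟩)
    set q : ℤ := A (k0 + 1) with hq_def
    set Asum : ℤ := ∑ k ∈ Finset.range n, A (k + 1) with hAsum_def
    have hAsum_nn : 0 ≤ Asum := Finset.sum_nonneg fun k _ => hA_nonneg _
    set N : ℤ := q * Asum + G * q with hN_def
    obtain ⟨x, hx⟩ := int_bezout (Finset.range n) (fun k => A (k + 1))
    rw [← hg_def, hgA] at hx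
    -- the key claim
    have key : ∀ t : ℤ, N ≤ t → ∀ y ∈ patternImage a 0 I,
        y + t ∈ patternImage a 0 I := by
      intro t ht y hy
      obtain ⟨s, hs_anti, hsI, rfl⟩ := hy
      set c : ℕ → ℤ := fun k =>
        if k < n ∧ k ≠ k0 ∧ 0 < A (k + 1) then (t * x k) % q else 0 with hc_def
      have hc_nonneg : ∀ k, 0 ≤ c k := by
        intro k
        rw [hc_def]
        dsimp only
        split_ifs with h
        · exact Int.emod_nonneg _ (ne_of_gt hq)
        · exact le_refl 0
      have hc_le : ∀ k, c k ≤ q := by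
        intro k
        rw [hc_def]
        dsimp only
        split_ifs with h
        · exact le_of_lt (Int.emod_lt_of_pos _ hq)
        · exact le_of_lt hq
      have hck0 : c k0 = 0 := by
        rw [hc_def]; simp
      set Bt : ℤ := ∑ k ∈ Finset.range n, c k * A (k + 1) with hBt_def
      have hBt0 : 0 ≤ Bt :=
        Finset.sum_nonneg fun k _ => mul_nonneg (hc_nonneg k) (hA_nonneg _)
      have hBt1 : Bt ≤ q * Asum := by
        rw [hBt_def, hAsum_def, Finset.mul_sum]
        exact Finset.sum_le_sum fun k _ =>
          mul_le_mul_of_nonneg_right (hc_le k) (hA_nonneg _)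
      have hqdvd : q ∣ t - Bt := by
        have ht_repr : t = ∑ k ∈ Finset.range n, (t * x k) * A (k + 1) := by
          calc t = t * 1 := (mul_one t).symm
            _ = t * ∑ k ∈ Finset.range n, x k * A (k + 1) := by rw [hx]
            _ = ∑ k ∈ Finset.range n, (t * x k) * A (k + 1) := by
                rw [Finset.mul_sum]
                exact Finset.sum_congr rfl fun k _ => by ring
        have hdiff : t - Bt = ∑ k ∈ Finset.range n, ((t * x k) - c k) * A (k + 1) := by
          calc t - Bt
              = (∑ k ∈ Finset.range n, (t * x k) * A (k + 1))
                - ∑ k ∈ Finset.range n, c k * A (k + 1) := by rw [← ht_repr, hBt_def]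
            _ = ∑ k ∈ Finset.range n, ((t * x k) - c k) * A (k + 1) := by
                rw [← Finset.sum_sub_distrib]
                exact Finset.sum_congr rfl fun k _ => (sub_mul _ _ _).symm
        rw [hdiff]
        refine Finset.dvd_sum fun k hk => ?_
        by_cases hcase : k < n ∧ k ≠ k0 ∧ 0 < A (k + 1)
        · have hck : c k = (t * x k) % q := by rw [hc_def]; simp [hcase]
          rw [hck]
          have heq : t * x k - t * x k % q = q * (t * x k / q) := by
            have := Int.mul_ediv_add_emod (t * x k) q
            linarith
          rw [heq]
          exact dvd_mul_of_dvd_left (Dvd.intro _ rfl) _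
        · have hck : c k = 0 := by rw [hc_def]; simp [hcase]
          rw [hck, sub_zero]
          by_cases hk0' : k = k0
          · subst hk0'
            rw [← hq_def]
            exact dvd_mul_left q _
          · have hkn : k < n := Finset.mem_range.mp hk
            have : A (k + 1) = 0 := by
              rcases lt_or_ge 0 (A (k + 1)) with h' | h'
              · exact absurd ⟨hkn, hk0', h'⟩ hcase
              · exact le_antisymm h' (hA_nonneg _)
            rw [this, mul_zero]
            exact dvd_zero q
        -- end hqdvd
      set c' : ℕ → ℤ := Function.update c k0 ((t - Bt) / q) with hc'_def
      have hc'k0 : c' k0 = (t - Bt) / q := by rw [hc'_def]; exact Function.update_self _ _ _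
      have hc'ne : ∀ k, k ≠ k0 → c' k = c k := by
        intro k hk
        rw [hc'_def]
        exact Function.update_of_ne hk _ _
      have hGle : G ≤ (t - Bt) / q := by
        rw [Int.le_ediv_iff_mul_le hq]
        have : N ≤ t := ht
        rw [hN_def] at this
        nlinarith
      have hc'_nonneg : ∀ k, 0 ≤ c' k := by
        intro k
        by_cases hk : k = k0
        · subst hk; rw [hc'k0]; omega
        · rw [hc'ne k hk]; exact hc_nonneg k
      have hc'_zero : ∀ k, k0 < k → c' k = 0 := by
        intro k hk
        rw [hc'ne k (by omega)]
        rw [hc_def]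
        dsimp only
        rw [if_neg]
        rintro ⟨h1, h2, h3⟩
        exact absurd (hk0max k h1 h3) (by omega)
      have hc'sum : ∑ k ∈ Finset.range n, c' k * A (k + 1) = t := by
        rw [← Finset.add_sum_erase _ _ (Finset.mem_range.mpr hk0n)]
        have h1 : ∑ k ∈ (Finset.range n).erase k0, c' k * A (k + 1)
            = ∑ k ∈ (Finset.range n).erase k0, c k * A (k + 1) := by
          exact Finset.sum_congr rfl fun k hk =>
            by rw [hc'ne k (Finset.ne_of_mem_erase hk)]
        have h2 : Bt = ∑ k ∈ (Finset.range n).erase k0, c k * A (k + 1) := by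
          rw [hBt_def, ← Finset.add_sum_erase _ _ (Finset.mem_range.mpr hk0n), hck0]
          ring
        rw [h1, ← h2, hc'k0, ← hq_def, Int.ediv_mul_cancel hqdvd]
        ring
      -- the shift sequence
      set m : Fin n → ℤ := fun i =>
        ∑ k ∈ (Finset.range n).filter (fun k => (i : ℕ) ≤ k), c' k with hm_def
      have hm_anti : Antitone m := by
        intro i j hij
        refine Finset.sum_le_sum_of_subset_of_nonneg ?_ (fun k _ _ => hc'_nonneg k)
        intro k hk
        rw [Finset.mem_filter] at hk ⊢
        exact ⟨hk.1, le_trans hij hk.2⟩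
      have hm_big : ∀ i : Fin n, (i : ℕ) ≤ k0 → G ≤ m i := by
        intro i hi
        have hk0f : k0 ∈ (Finset.range n).filter (fun k => (i : ℕ) ≤ k) :=
          Finset.mem_filter.mpr ⟨Finset.mem_range.mpr hk0n, hi⟩
        have hle : c' k0 ≤ m i :=
          Finset.single_le_sum (f := fun k => c' k) (fun k _ => hc'_nonneg k) hk0f
        calc G ≤ (t - Bt) / q := hGle
          _ = c' k0 := hc'k0.symm
          _ ≤ m i := hle
      have hm_zero : ∀ i : Fin n, k0 < (i : ℕ) → m i = 0 := by
        intro i hi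
        refine Finset.sum_eq_zero fun k hk => ?_
        rw [Finset.mem_filter] at hk
        exact hc'_zero k (by omega)
      have hm_val : ∑ i, a i * m i = t := by
        have step1 : ∀ i : Fin n, a i * m i
            = ∑ k ∈ Finset.range n, (if (i : ℕ) ≤ k then a i * c' k else 0) := by
          intro i
          rw [hm_def]
          dsimp only
          rw [Finset.mul_sum, Finset.sum_filter]
        rw [Finset.sum_congr rfl fun i _ => step1 i, Finset.sum_comm]
        have step2 : ∀ k ∈ Finset.range n,
            (∑ i : Fin n, if (i : ℕ) ≤ k then a i * c' k else 0)
            = c' k * A (k + 1) := by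
          intro k _
          rw [← Finset.sum_filter]
          have hpred : Finset.univ.filter (fun i : Fin n => (i : ℕ) ≤ k)
              = Finset.univ.filter (fun i : Fin n => (i : ℕ) < k + 1) := by
            apply Finset.filter_congr
            intro i _
            simp [Nat.lt_succ_iff]
          rw [hpred, ← Finset.sum_mul, hA_def]
          ring
        rw [Finset.sum_congr rfl step2, hc'sum]
      -- conclude
      refine ⟨fun i => s i + m i, hs_anti.add hm_anti, ?_, ?_⟩
      · intro i
        show s i + m i ∈ I
        by_cases hi : (i : ℕ) ≤ k0
        · exact hI.2.2 _ (hsI i) _ (hG _ (hm_big i hi))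
        · rw [hm_zero i (by omega), add_zero]
          exact hsI i
      · have : ∑ i, a i * (s i + m i) = (∑ i, a i * s i) + ∑ i, a i * m i := by
          rw [← Finset.sum_add_distrib]
          exact Finset.sum_congr rfl fun i _ => by ring
        rw [this, hm_val]
        ring
    -- build the semigroup T
    refine ⟨{t : ℤ | 0 ≤ t ∧ ∀ y ∈ patternImage a 0 I, y + t ∈ patternImage a 0 I},
      ⟨⟨le_refl 0, fun y hy => by simpa using hy⟩, fun t ht => ht.1,
        fun t1 ht1 t2 ht2 => ⟨add_nonneg ht1.1 ht2.1, fun y hy => by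
          have h1 := ht1.2 y hy
          have h2 := ht2.2 _ h1
          rwa [add_assoc] at h2⟩, ?_⟩,
      pI_ne, fun y hy => ⟨pI_nonneg y hy, fun z hz => pI_add z hz y hy⟩,
      fun y hy t ht => ht.2 y hy⟩
    -- finiteness of the complement
    refine Set.Finite.subset (Set.finite_Ico (0 : ℤ) (max N 0 + 1)) ?_
    rintro z ⟨hz0, hz⟩
    rw [Set.mem_Ico]
    refine ⟨hz0, ?_⟩
    by_contra h
    push_neg at h
    have hzN : N ≤ z := by
      have := le_max_left N (0:ℤ); omega
    exact hz ⟨hz0, key z hzN⟩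
end

section
/- Let p(X₁,…,Xₙ) = a₁X₁ + ⋯ + aₙXₙ (with n ≥ 1) be a homogeneous linear pattern admitted by ℤ₊, and let S be a numerical semigroup. Then p(S) is a numerical semigroup if and only if gcd(a₁,…,aₙ) = 1. -/
open Finset

lemma gcd_mem_span' {ι : Type*} [DecidableEq ι] (s : Finset ι) (f : ι → ℤ) :
    (s.gcd f : ℤ) ∈ Ideal.span (f '' ↑s) := by
  induction s using Finset.induction_on with
  | empty => simp [Ideal.zero_mem]
  | insert i s hi ih =>
    rw [Finset.gcd_insert]
    have h1 : (GCDMonoid.gcd (f i) (s.gcd f) : ℤ) ∈ Ideal.span {f i, s.gcd f} := by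
      rw [← span_gcd]
      exact Ideal.subset_span rfl
    have h2 : Ideal.span {f i, s.gcd f} ≤ Ideal.span (f '' ↑(insert i s)) := by
      rw [Ideal.span_le]
      rintro x (rfl | rfl)
      · exact Ideal.subset_span ⟨i, by simp⟩
      · refine Ideal.span_mono ?_ ih
        intro y hy
        simp only [Finset.coe_insert, Set.image_insert_eq]
        exact Set.mem_insert_of_mem _ hy
    exact h2 h1

lemma bezout' {n : ℕ} (b : Fin n → ℤ) (h : Finset.univ.gcd b ∣ 1) :
    ∃ x : Fin n → ℤ, ∑ i, x i * b i = 1 := by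
  classical
  have hmem : (Finset.univ.gcd b : ℤ) ∈ Ideal.span (Set.range b) := by
    have := gcd_mem_span' Finset.univ b
    rwa [Finset.coe_univ, Set.image_univ] at this
  obtain ⟨u, hu⟩ := h
  have h1 : (1 : ℤ) ∈ Ideal.span (Set.range b) := by
    rw [hu]; exact Ideal.mul_mem_right _ _ hmem
  exact (Ideal.mem_span_range_iff_exists_fun).mp h1

lemma reach' {n : ℕ} (b : Fin n → ℤ) (hb : ∀ i, 0 ≤ b i)
    (x : Fin n → ℤ) (hx : ∑ i, x i * b i = 1) (m : ℤ)
    (hm : (∑ i, b i) * (∑ i, b i) ≤ m) :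
    ∃ c : Fin n → ℤ, (∀ i, 0 ≤ c i) ∧ ∑ i, c i * b i = m := by
  classical
  obtain ⟨k0, hk0⟩ : ∃ k0, b k0 ≠ 0 := by
    by_contra h
    push_neg at h
    simp [h] at hx
  set g := b k0 with hgdef
  have hg : 0 < g := lt_of_le_of_ne (hb k0) (Ne.symm hk0)
  set r : Fin n → ℤ := fun i => (x i * m) % g with hr
  have hr0 : ∀ i, 0 ≤ r i := fun i => Int.emod_nonneg _ (ne_of_gt hg)
  have hrle : ∀ i, r i ≤ g := fun i => le_of_lt (Int.emod_lt_of_pos _ hg)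
  set T : ℤ := ∑ i ∈ Finset.univ.erase k0, r i * b i with hT
  set U : ℤ := ∑ i ∈ Finset.univ.erase k0, (x i * m) * b i with hU
  have h5 : ∑ i, (x i * m) * b i = m := by
    have h : ∑ i, (x i * m) * b i = ∑ i, m * (x i * b i) :=
      Finset.sum_congr rfl fun i _ => by ring
    rw [h, ← Finset.mul_sum, hx, mul_one]
  have h3 : U = m - (x k0 * m) * g := by
    have h4 : U + (x k0 * m) * b k0 = ∑ i, (x i * m) * b i :=
      Finset.sum_erase_add _ _ (Finset.mem_univ k0)
    rw [h5] at h4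
    rw [← hgdef] at h4
    omega
  have hdvd : g ∣ m - T := by
    have h1 : ∀ i, g ∣ (x i * m - r i) := by
      intro i
      refine ⟨(x i * m) / g, ?_⟩
      show x i * m - (x i * m) % g = g * (x i * m / g)
      rw [Int.emod_def]; ring
    have h2 : g ∣ U - T := by
      rw [hU, hT, ← Finset.sum_sub_distrib]
      refine Finset.dvd_sum fun i _ => ?_
      rw [← sub_mul]
      exact Dvd.dvd.mul_right (h1 i) _
    have hA : g ∣ m - U := ⟨x k0 * m, by rw [h3]; ring⟩
    have := dvd_add hA h2
    rwa [show m - U + (U - T) = m - T from by ring] at this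
  set q : ℤ := (m - T) / g with hq
  have hqg : g * q = m - T := Int.mul_ediv_cancel' hdvd
  have hTle : T ≤ m := by
    have h1 : T ≤ ∑ i ∈ Finset.univ.erase k0, g * b i :=
      Finset.sum_le_sum fun i _ => mul_le_mul_of_nonneg_right (hrle i) (hb i)
    have h2 : (∑ i ∈ Finset.univ.erase k0, g * b i) ≤ ∑ i, g * b i :=
      Finset.sum_le_sum_of_subset_of_nonneg (Finset.erase_subset _ _)
        fun i _ _ => mul_nonneg (le_of_lt hg) (hb i)
    have h3 : (∑ i, g * b i) = g * ∑ i, b i := by rw [Finset.mul_sum]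
    have h4 : g ≤ ∑ i, b i := Finset.single_le_sum (fun i _ => hb i) (Finset.mem_univ k0)
    have hB : 0 ≤ ∑ i, b i := Finset.sum_nonneg fun i _ => hb i
    have h6 : g * (∑ i, b i) ≤ (∑ i, b i) * (∑ i, b i) :=
      mul_le_mul_of_nonneg_right h4 hB
    omega
  have hq0 : 0 ≤ q := Int.ediv_nonneg (by omega) (le_of_lt hg)
  refine ⟨fun i => if i = k0 then q else r i, fun i => ?_, ?_⟩
  · by_cases h : i = k0 <;> simp [h, hq0, hr0 i]
  · rw [← Finset.sum_erase_add _ _ (Finset.mem_univ k0)]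
    have heq : (∑ i ∈ Finset.univ.erase k0, (if i = k0 then q else r i) * b i) = T := by
      refine Finset.sum_congr rfl fun i hi => ?_
      rw [if_neg (Finset.ne_of_mem_erase hi)]
    rw [heq]
    show T + (if k0 = k0 then q else r k0) * b k0 = m
    rw [if_pos rfl, ← hgdef, mul_comm]
    omega


lemma abel' {n : ℕ} (a t : Fin n → ℤ) :
    ∑ i, a i * (∑ j ∈ Finset.univ.filter (fun j => i ≤ j), t j)
      = ∑ j, (∑ i ∈ Finset.univ.filter (fun i => i ≤ j), a i) * t j := by
  simp_rw [Finset.mul_sum, Finset.sum_mul, Finset.sum_filter]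
  exact Finset.sum_comm

/-- If the homogeneous linear pattern `a₁X₁+⋯+aₙXₙ` is admitted by ℤ₊ and `S` is a
numerical semigroup, then `p(S)` is a numerical semigroup iff `gcd(a₁,…,aₙ) = 1`. -/
theorem stmt2 {n : ℕ} (hn : 0 < n) (a : Fin n → ℤ)
    (hadm : ∀ s : Fin n → ℤ, Antitone s → (∀ i, 0 ≤ s i) → 0 ≤ ∑ i, a i * s i)
    (S : Set ℤ) (hS : IsNumericalSemigroup S) :
    IsNumericalSemigroup (patternImage a 0 S) ↔ Finset.univ.gcd a = 1 := by
  classical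
  constructor
  · intro hP
    have hdvd : ∀ y ∈ patternImage a 0 S, Finset.univ.gcd a ∣ y := by
      rintro y ⟨s, hs, hsS, rfl⟩
      rw [add_zero]
      exact Finset.dvd_sum fun i _ =>
        Dvd.dvd.mul_right (Finset.gcd_dvd (Finset.mem_univ i)) _
    obtain ⟨ub, hub⟩ := hP.2.2.2.bddAbove
    have hmem : ∀ z : ℤ, ub < z → 0 ≤ z → z ∈ patternImage a 0 S := by
      intro z hz h0
      by_contra hzn
      exact absurd (hub ⟨h0, hzn⟩) (not_le.mpr hz)
    set N : ℤ := max ub 0 + 1 with hN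
    have h1 : N ∈ patternImage a 0 S := hmem N (by omega) (by omega)
    have h2 : N + 1 ∈ patternImage a 0 S := hmem (N + 1) (by omega) (by omega)
    have hd1 : Finset.univ.gcd a ∣ 1 := by
      have := dvd_sub (hdvd _ h2) (hdvd _ h1)
      simpa using this
    rw [← Finset.normalize_gcd]
    exact normalize_eq_one.mpr (isUnit_of_dvd_one hd1)
  · intro hg
    refine ⟨⟨fun _ => 0, antitone_const, fun _ => hS.1, by simp⟩, ?_, ?_, ?_⟩
    · rintro y ⟨s, hs, hsS, rfl⟩
      rw [add_zero]
      exact hadm s hs fun i => hS.2.1 _ (hsS i)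
    · rintro y ⟨s, hs, hsS, rfl⟩ z ⟨t, ht, htS, rfl⟩
      refine ⟨s + t, hs.add ht, fun i => hS.2.2.1 _ (hsS i) _ (htS i), ?_⟩
      rw [add_zero, add_zero, add_zero, ← Finset.sum_add_distrib]
      exact Finset.sum_congr rfl fun i _ => by simp [mul_add]
    · -- cofiniteness
      set b : Fin n → ℤ := fun j => ∑ i ∈ Finset.univ.filter (fun i => i ≤ j), a i
        with hbdef
      have hb0 : ∀ j, 0 ≤ b j := by
        intro j
        have h := hadm (fun i => if i ≤ j then 1 else 0) ?_ ?_
        · have he : ∑ i, a i * (if i ≤ j then (1:ℤ) else 0) = b j := by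
            simp_rw [mul_ite, mul_one, mul_zero, hbdef, Finset.sum_filter]
          rwa [he] at h
        · intro i1 i2 h12
          by_cases h2 : i2 ≤ j
          · simp [h2, h12.trans h2]
          · simp only [if_neg h2]
            split_ifs <;> norm_num
        · intro i
          by_cases h : i ≤ j <;> simp [h]
      have hgb : Finset.univ.gcd b ∣ 1 := by
        rw [← hg]
        refine Finset.dvd_gcd fun j _ => ?_
        rcases j with ⟨jv, hj⟩
        cases jv with
        | zero =>
          have hfe : Finset.univ.filter (fun i => i ≤ (⟨0, hj⟩ : Fin n)) = {⟨0, hj⟩} := by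
            ext i
            simp only [Finset.mem_filter, Finset.mem_univ, true_and,
              Finset.mem_singleton, Fin.le_def, Fin.ext_iff]
            omega
          have he : b ⟨0, hj⟩ = a ⟨0, hj⟩ := by
            show (∑ i ∈ Finset.univ.filter (fun i => i ≤ (⟨0, hj⟩ : Fin n)), a i) = _
            rw [hfe, Finset.sum_singleton]
          rw [← he]
          exact Finset.gcd_dvd (Finset.mem_univ _)
        | succ mm =>
          have hj' : mm < n := by omega
          have hnot : (⟨mm + 1, hj⟩ : Fin n) ∉
              Finset.univ.filter (fun i => i ≤ (⟨mm, hj'⟩ : Fin n)) := by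
            simp [Fin.le_def]
          have hsplit : Finset.univ.filter (fun i => i ≤ (⟨mm + 1, hj⟩ : Fin n)) =
              insert (⟨mm + 1, hj⟩ : Fin n)
                (Finset.univ.filter (fun i => i ≤ (⟨mm, hj'⟩ : Fin n))) := by
            ext i
            simp only [Finset.mem_filter, Finset.mem_univ, true_and,
              Finset.mem_insert, Fin.le_def, Fin.ext_iff]
            omega
          have he : b ⟨mm + 1, hj⟩ = a ⟨mm + 1, hj⟩ + b ⟨mm, hj'⟩ := by
            show (∑ i ∈ Finset.univ.filter (fun i => i ≤ (⟨mm + 1, hj⟩ : Fin n)), a i) = _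
            rw [hsplit, Finset.sum_insert hnot]
          have : a ⟨mm + 1, hj⟩ = b ⟨mm + 1, hj⟩ - b ⟨mm, hj'⟩ := by omega
          rw [this]
          exact dvd_sub (Finset.gcd_dvd (Finset.mem_univ _))
            (Finset.gcd_dvd (Finset.mem_univ _))
      obtain ⟨xB, hxB⟩ := bezout' b hgb
      obtain ⟨ub, hub⟩ := hS.2.2.2.bddAbove
      have hmemS : ∀ z : ℤ, ub < z → 0 ≤ z → z ∈ S := by
        intro z hz h0
        by_contra hzn
        exact absurd (hub ⟨h0, hzn⟩) (not_le.mpr hz)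
      set N : ℤ := max ub 0 + 1 with hN
      have hN0 : 0 < N := by omega
      have hNS : ∀ z : ℤ, N ≤ z → z ∈ S := fun z hz => hmemS z (by omega) (by omega)
      set B : ℤ := ∑ j, b j with hB
      have hB0 : 0 ≤ B := Finset.sum_nonneg fun j _ => hb0 j
      have hkey : ∀ m : ℤ, B * B ≤ m → m + N * B ∈ patternImage a 0 S := by
        intro m hm
        obtain ⟨c, hc0, hcm⟩ := reach' b hb0 xB hxB m hm
        set t : Fin n → ℤ := fun j => c j + N with htdef
        have ht : ∀ j, N ≤ t j := fun j => by have := hc0 j; simp [htdef]; omega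
        set s : Fin n → ℤ := fun i => ∑ j ∈ Finset.univ.filter (fun j => i ≤ j), t j
          with hsdef
        have hanti : Antitone s := by
          intro i1 i2 h12
          refine Finset.sum_le_sum_of_subset_of_nonneg ?_ fun j _ _ => by
            have := ht j; omega
          intro j hj
          simp only [Finset.mem_filter, Finset.mem_univ, true_and] at hj ⊢
          exact h12.trans hj
        have hsS : ∀ i, s i ∈ S := by
          intro i
          refine hNS _ ?_
          calc N ≤ t i := ht i
            _ ≤ s i := Finset.single_le_sum (fun j _ => by have := ht j; omega)
                (by simp)
        refine ⟨s, hanti, hsS, ?_⟩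
        rw [add_zero, hsdef]
        rw [abel' a t]
        have : ∀ j, (∑ i ∈ Finset.univ.filter (fun i => i ≤ j), a i) * t j
            = c j * b j + N * b j := fun j => by
          show b j * (c j + N) = c j * b j + N * b j
          ring
        simp_rw [this]
        rw [Finset.sum_add_distrib, hcm, ← Finset.mul_sum, ← hB]
      refine Set.Finite.subset (Set.finite_Ico 0 (B * B + N * B)) ?_
      rintro z ⟨hz0, hzn⟩
      refine ⟨hz0, ?_⟩
      by_contra hlt
      push_neg at hlt
      have : z - N * B + N * B ∈ patternImage a 0 S := hkey _ (by omega)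
      rw [sub_add_cancel] at this
      exact hzn this
end

section
/- Let p(X₁,…,Xₙ) = a₁X₁ + ⋯ + aₙXₙ + a₀ be a premonic linear pattern admitted by an ideal I of a numerical semigroup S. Then p(I) is an ideal of S, i.e., p(I) is a nonempty subset of S satisfying p(I) + S ⊆ p(I). -/
open Finset

/-- If a premonic linear pattern is admitted by an ideal `I` of a numerical semigroup
`S`, then `p(I)` is an ideal of `S`. -/
theorem stmt4 {n : ℕ} (a : Fin n → ℤ) (a₀ : ℤ) (S I : Set ℤ)
    (hS : IsNumericalSemigroup S) (hI : IsIdealOf I S)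
    (hadm : AdmittedBy a a₀ I S) (hpre : Premonic a) :
    IsIdealOf (patternImage a a₀ I) S := by
  obtain ⟨x₀, hx₀⟩ := hI.1
  obtain ⟨k, hk1, hkn, hksum⟩ := hpre
  refine ⟨⟨∑ i, a i * x₀ + a₀, fun _ => x₀, antitone_const, fun _ => hx₀, rfl⟩,
    ?_, ?_⟩
  · rintro y ⟨s, hs, hsI, rfl⟩
    exact hadm s hs hsI
  · rintro y ⟨s, hs, hsI, rfl⟩ t ht
    have ht0 : 0 ≤ t := hS.2.1 t ht
    set s' : Fin n → ℤ := fun i => if (i : ℕ) < k then s i + t else s i with hs'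
    have hanti : Antitone s' := by
      intro i j hij
      simp only [hs']
      by_cases hj : (j : ℕ) < k
      · have hi : (i : ℕ) < k := lt_of_le_of_lt (by exact_mod_cast hij) hj
        simp [hi, hj, hs hij]
      · by_cases hi : (i : ℕ) < k
        · simp only [hi, hj, if_true, if_false]
          have := hs hij
          omega
        · simp [hi, hj, hs hij]
    have hmemI : ∀ i, s' i ∈ I := by
      intro i
      simp only [hs']
      by_cases hi : (i : ℕ) < k
      · simp only [hi, if_true]
        exact hI.2.2 _ (hsI i) _ ht
      · simpa [hi] using hsI i
    refine ⟨s', hanti, hmemI, ?_⟩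
    have hsum : ∑ i, a i * s' i = ∑ i, a i * s i + t := by
      have h1 : ∀ i, a i * s' i = a i * s i + (if (i : ℕ) < k then a i * t else 0) := by
        intro i
        simp only [hs']
        by_cases hi : (i : ℕ) < k <;> simp [hi, mul_add]
      simp only [h1, Finset.sum_add_distrib]
      congr 1
      rw [← Finset.sum_filter]
      rw [← Finset.sum_mul, hksum, one_mul]
    rw [hsum]; ring
end

section
/- If p(X₁,…,Xₙ) = a₁X₁ + ⋯ + aₙXₙ + a₀ is a linear pattern admitted by an ideal I of a numerical semigroup S, then (i) a₁ + ⋯ + a_{n'} ≥ 0 for every 1 ≤ n' ≤ n, and (ii) a₁s₁ + ⋯ + aₙsₙ ≥ (a₁ + ⋯ + aₙ)·sₙ for every non-increasing sequence s₁ ≥ ⋯ ≥ sₙ of elements of I. -/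
open Finset

/-- If a linear pattern is admitted by an ideal `I` of a numerical semigroup `S`,
then all initial partial sums of coefficients are nonnegative, and
`∑ aᵢ sᵢ ≥ (∑ aᵢ) sₙ` for every non-increasing sequence of elements of `I`. -/
theorem stmt5 {n : ℕ} (hn : 0 < n) (a : Fin n → ℤ) (a₀ : ℤ) (S I : Set ℤ)
    (hS : IsNumericalSemigroup S) (hI : IsIdealOf I S)
    (hadm : AdmittedBy a a₀ I S) :
    (∀ k : ℕ, 1 ≤ k → k ≤ n →
        0 ≤ ∑ i ∈ Finset.univ.filter (fun i : Fin n => (i : ℕ) < k), a i) ∧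
    (∀ s : Fin n → ℤ, Antitone s → (∀ i, s i ∈ I) →
        (∑ i, a i) * s ⟨n - 1, by omega⟩ ≤ ∑ i, a i * s i) := by
  obtain ⟨h0S, hSnn, hSadd, hfin⟩ := hS
  obtain ⟨⟨x0, hx0⟩, hIS, hImem⟩ := hI
  have hx0nn : 0 ≤ x0 := hSnn x0 (hIS hx0)
  -- I has arbitrarily large elements
  have hlarge : ∀ N : ℤ, ∃ x ∈ I, N ≤ x := by
    intro N
    obtain ⟨B, hB⟩ := hfin.bddAbove
    set z : ℤ := max 0 (max B (N - x0)) + 1 with hz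
    have hz0 : 0 ≤ z := by positivity
    have hzS : z ∈ S := by
      by_contra h
      have : z ≤ B := hB ⟨hz0, h⟩
      have : B ≤ max 0 (max B (N - x0)) := le_trans (le_max_left _ _) (le_max_right _ _)
      omega
    refine ⟨x0 + z, hImem _ hx0 _ hzS, ?_⟩
    have : N - x0 ≤ max 0 (max B (N - x0)) := le_trans (le_max_right _ _) (le_max_right _ _)
    omega
  -- part (i)
  have part1 : ∀ k : ℕ, 1 ≤ k → k ≤ n →
      0 ≤ ∑ i ∈ Finset.univ.filter (fun i : Fin n => (i : ℕ) < k), a i := by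
    intro k hk1 hkn
    by_contra hneg
    push_neg at hneg
    set A := ∑ i ∈ Finset.univ.filter (fun i : Fin n => (i : ℕ) < k), a i with hA
    set R := ∑ i ∈ Finset.univ.filter (fun i : Fin n => ¬ (i : ℕ) < k), a i with hR
    obtain ⟨T, hTI, hTge⟩ := hlarge (max x0 (R * x0 + a₀ + 1))
    have hTx0 : x0 ≤ T := le_trans (le_max_left _ _) hTge
    have hTbig : R * x0 + a₀ + 1 ≤ T := le_trans (le_max_right _ _) hTge
    set s : Fin n → ℤ := fun i => if (i : ℕ) < k then T else x0 with hs
    have hanti : Antitone s := by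
      intro i j hij
      have hij' : (i : ℕ) ≤ (j : ℕ) := hij
      simp only [hs]
      split_ifs with h1 h2 h2 <;> omega
    have hmem : ∀ i, s i ∈ I := by
      intro i; simp only [hs]; split_ifs <;> assumption
    have hval := hadm s hanti hmem
    have hval0 : 0 ≤ ∑ i, a i * s i + a₀ := hSnn _ hval
    have hsplit : ∑ i, a i * s i = A * T + R * x0 := by
      rw [hA, hR, ← Finset.sum_filter_add_sum_filter_not Finset.univ
        (fun i : Fin n => (i : ℕ) < k) (fun i => a i * s i), Finset.sum_mul, Finset.sum_mul]
      congr 1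
      · apply Finset.sum_congr rfl
        intro i hi
        simp only [Finset.mem_filter] at hi
        simp [hs, hi.2]
      · apply Finset.sum_congr rfl
        intro i hi
        simp only [Finset.mem_filter] at hi
        simp [hs, hi.2]
    rw [hsplit] at hval0
    have hTnn : 0 ≤ T := le_trans hx0nn hTx0
    nlinarith
  refine ⟨part1, ?_⟩
  -- part (ii)
  intro s hanti hmem
  set f : ℕ → ℤ := fun i => s ⟨min i (n - 1), by omega⟩ with hf
  set g : ℕ → ℤ := fun i => if h : i < n then a ⟨i, h⟩ else 0 with hg
  have hfs : ∀ i : Fin n, f (i : ℕ) = s i := by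
    intro i
    simp only [hf]
    congr 1
    exact Fin.ext (by have := i.isLt; simp; omega)
  have hga : ∀ i : Fin n, g (i : ℕ) = a i := by
    intro i; simp only [hg, i.isLt, dif_pos]
  have hsum1 : ∑ i, a i * s i = ∑ i ∈ range n, f i * g i := by
    rw [← Fin.sum_univ_eq_sum_range (fun i => f i * g i) n]
    apply Finset.sum_congr rfl
    intro i _
    rw [hfs, hga]; ring
  have hsum2 : ∑ i, a i = ∑ i ∈ range n, g i := by
    rw [← Fin.sum_univ_eq_sum_range (fun i => g i) n]
    exact Finset.sum_congr rfl fun i _ => (hga i).symm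
  have hG : ∀ j : ℕ, j ≤ n → ∑ i ∈ range j, g i =
      ∑ i ∈ Finset.univ.filter (fun i : Fin n => (i : ℕ) < j), a i := by
    intro j hj
    have e1 : ∑ i ∈ Finset.univ.filter (fun i : Fin n => (i : ℕ) < j), a i
        = ∑ i : Fin n, if (i : ℕ) < j then g (i : ℕ) else 0 := by
      rw [Finset.sum_filter]
      exact Finset.sum_congr rfl fun i _ => by rw [hga]
    rw [e1, Fin.sum_univ_eq_sum_range (fun i => if i < j then g i else 0) n,
      ← Finset.sum_filter]
    congr 1
    ext i
    simp only [Finset.mem_filter, Finset.mem_range]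
    omega
  have hfanti : ∀ i : ℕ, f (i + 1) ≤ f i := by
    intro i
    apply hanti
    simp only [Fin.mk_le_mk]
    omega
  have hby := Finset.sum_range_by_parts f g n
  simp only [smul_eq_mul] at hby
  rw [hsum1, hsum2, hby]
  have hfn : f (n - 1) = s ⟨n - 1, by omega⟩ := by
    simp only [hf]
    congr 1
    exact Fin.ext (by simp)
  rw [hfn]
  have hterm : 0 ≤ ∑ i ∈ range (n - 1), (f i - f (i + 1)) * ∑ j ∈ range (i + 1), g j := by
    apply Finset.sum_nonneg
    intro i hi
    rw [Finset.mem_range] at hi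
    apply mul_nonneg
    · linarith [hfanti i]
    · rw [hG (i + 1) (by omega)]
      exact part1 (i + 1) (by omega) (by omega)
  have : ∑ i ∈ range (n - 1), (f (i + 1) - f i) * ∑ j ∈ range (i + 1), g j
      = - ∑ i ∈ range (n - 1), (f i - f (i + 1)) * ∑ j ∈ range (i + 1), g j := by
    rw [← Finset.sum_neg_distrib]
    exact Finset.sum_congr rfl fun i _ => by ring
  rw [this]
  linarith
end

section
/- Let p(X₁,…,Xₙ) = a₁X₁ + ⋯ + aₙXₙ + a₀ be a linear pattern admitted by a numerical semigroup S that is a surjective endopattern of S, that is, p(S) = S. Then p is homogeneous, i.e., a₀ = 0. -/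
open Finset

/-- A linear surjective endopattern of a numerical semigroup `S` (a pattern admitted
by `S` with `p(S) = S`) is necessarily homogeneous, i.e. `a₀ = 0`. -/
theorem stmt6 {n : ℕ} (a : Fin n → ℤ) (a₀ : ℤ) (S : Set ℤ)
    (hS : IsNumericalSemigroup S) (hadm : AdmittedBy a a₀ S S)
    (hsur : patternImage a a₀ S = S) :
    a₀ = 0 := by
  obtain ⟨h0, hpos, hadd, _⟩ := hS
  have ha0 : a₀ ∈ S := by
    have := hadm (fun _ => 0) (fun i j _ => le_refl 0) (fun _ => h0)
    simpa using this
  have h0img : (0 : ℤ) ∈ patternImage a a₀ S := by rw [hsur]; exact h0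
  obtain ⟨s, hanti, hmem, heq⟩ := h0img
  have h2 : ∑ i, a i * (2 * s i) + a₀ ∈ S := by
    apply hadm
    · intro i j hij
      have := hanti hij
      simp only; linarith
    · intro i
      have := hadd _ (hmem i) _ (hmem i)
      simpa [two_mul] using this
  have hdouble : ∑ i, a i * (2 * s i) = 2 * ∑ i, a i * s i := by
    rw [Finset.mul_sum]
    exact Finset.sum_congr rfl fun i _ => by ring
  have hsum : ∑ i, a i * s i = -a₀ := by linarith
  rw [hdouble, hsum] at h2
  have h2' : -a₀ ∈ S := by
    have h3 : 2 * -a₀ + a₀ = -a₀ := by ring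
    rwa [h3] at h2
  have := hpos _ ha0
  have := hpos _ h2'
  linarith
end

section
/- If p(X₁,…,Xₙ) = a₁X₁ + ⋯ + aₙXₙ + a₀ is a linear pattern admitted by a proper ideal I of a numerical semigroup S, then a₁ + ⋯ + a_{n'} ≥ 0 for every 1 ≤ n' ≤ n, and moreover (a₁ + ⋯ + aₙ)·μ(I) + a₀ ≥ 0, where μ(I) = min I (equivalently, a₁ + ⋯ + aₙ ≥ max(0, −a₀/μ(I))). -/
open Finset

/-- If a linear pattern is admitted by a proper ideal `I` of a numerical semigroup
`S`, then all initial partial sums of coefficients are nonnegative and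
`(∑ aᵢ)·μ(I) + a₀ ≥ 0` where `μ(I) = min I`. -/
theorem stmt7 {n : ℕ} (a : Fin n → ℤ) (a₀ : ℤ) (S I : Set ℤ) (μ : ℤ)
    (hS : IsNumericalSemigroup S) (hI : IsIdealOf I S) (hproper : I ≠ S)
    (hμ : IsLeast I μ) (hadm : AdmittedBy a a₀ I S) :
    (∀ k : ℕ, 1 ≤ k → k ≤ n →
        0 ≤ ∑ i ∈ Finset.univ.filter (fun i : Fin n => (i : ℕ) < k), a i) ∧
    0 ≤ (∑ i, a i) * μ + a₀ := by
  obtain ⟨hS0, hSnn, hSadd, hSfin⟩ := hS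
  obtain ⟨hIne, hIS, hIadd⟩ := hI
  obtain ⟨hμI, hμlb⟩ := hμ
  constructor
  · intro k hk1 hkn
    by_contra hneg
    push_neg at hneg
    set c := ∑ i ∈ Finset.univ.filter (fun i : Fin n => (i : ℕ) < k), a i with hc
    have hc1 : c ≤ -1 := by omega
    obtain ⟨b, hb⟩ := hSfin.bddAbove
    set D := (∑ i, a i) * μ + a₀ with hD
    set t := max b 0 + max D 0 + 1 with ht
    have hb0 : b ≤ max b 0 := le_max_left b 0
    have hb0' : (0:ℤ) ≤ max b 0 := le_max_right b 0
    have hD0 : D ≤ max D 0 := le_max_left D 0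
    have hD0' : (0:ℤ) ≤ max D 0 := le_max_right D 0
    have ht0 : 0 ≤ t := by omega
    have htD : D + 1 ≤ t := by omega
    have htS : t ∈ S := by
      by_contra h
      have hm : t ∈ {z : ℤ | 0 ≤ z ∧ z ∉ S} := ⟨ht0, h⟩
      have := hb hm
      omega
    set s := fun i : Fin n => μ + (if (i : ℕ) < k then t else 0) with hs
    have hanti : Antitone s := by
      intro i j hij
      simp only [hs]
      by_cases hj : (j : ℕ) < k
      · have hi : (i : ℕ) < k := lt_of_le_of_lt (by exact_mod_cast hij) hj
        simp [hi, hj]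
      · rw [if_neg hj]
        by_cases hi : (i : ℕ) < k
        · rw [if_pos hi]; omega
        · rw [if_neg hi]
    have hmem : ∀ i, s i ∈ I := by
      intro i
      simp only [hs]
      split
      · exact hIadd μ hμI t htS
      · simpa using hμI
    have hval := hadm s hanti hmem
    have hsum : ∑ i, a i * s i = (∑ i, a i) * μ + c * t := by
      simp only [hs, mul_add, Finset.sum_add_distrib]
      congr 1
      · rw [Finset.sum_mul]
      · rw [hc, Finset.sum_mul, Finset.sum_filter]
        simp [mul_ite]
    rw [hsum] at hval
    have hpos := hSnn _ hval
    have hct : c * t ≤ -t := by nlinarith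
    have : 0 ≤ D + c * t := by rw [hD]; linarith
    linarith
  · have h := hadm (fun _ => μ) (fun i j _ => le_refl μ) (fun _ => hμI)
    have := hSnn _ h
    rwa [← Finset.sum_mul] at this
end

section
/- Let p(X₁,…,Xₙ) = a₁X₁ + ⋯ + aₙXₙ + a₀ be a linear endopattern of a proper ideal I of a numerical semigroup S, i.e., p(s₁,…,sₙ) ∈ I for every non-increasing sequence s₁ ≥ ⋯ ≥ sₙ of elements of I. Then, writing μ(I) = min I: a₁ + ⋯ + a_{n'} ≥ 0 for every 1 ≤ n' ≤ n, (a₁ + ⋯ + aₙ)·μ(I) + a₀ ≥ 0, and additionally either a₀ > 0, or both a₁ + ⋯ + aₙ > 0 and (a₁ + ⋯ + aₙ)·μ(I) + a₀ > 0. -/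
open Finset

/-- A linear endopattern of a proper ideal `I` of a numerical semigroup `S`
satisfies: all initial partial sums of coefficients are nonnegative,
`(∑ aᵢ)·μ(I) + a₀ ≥ 0`, and additionally either `a₀ > 0` or both `∑ aᵢ > 0` and
`(∑ aᵢ)·μ(I) + a₀ > 0`. -/
theorem stmt8 {n : ℕ} (a : Fin n → ℤ) (a₀ : ℤ) (S I : Set ℤ) (μ : ℤ)
    (hS : IsNumericalSemigroup S) (hI : IsIdealOf I S) (hproper : I ≠ S)
    (hμ : IsLeast I μ) (hendo : AdmittedBy a a₀ I I) :
    (∀ k : ℕ, 1 ≤ k → k ≤ n →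
        0 ≤ ∑ i ∈ Finset.univ.filter (fun i : Fin n => (i : ℕ) < k), a i) ∧
    0 ≤ (∑ i, a i) * μ + a₀ ∧
    (0 < a₀ ∨ (0 < ∑ i, a i ∧ 0 < (∑ i, a i) * μ + a₀)) := by

  obtain ⟨hμI, hμlb⟩ := hμ
  obtain ⟨hS0, hSnn, hSadd, hSfin⟩ := hS
  obtain ⟨hIne, hIS, hIadd⟩ := hI
  have h0I : (0:ℤ) ∉ I := by
    intro h0
    apply hproper
    apply Set.Subset.antisymm hIS
    intro s hs
    simpa using hIadd 0 h0 s hs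
  have hμpos : 1 ≤ μ := by
    have h0 := hSnn μ (hIS hμI)
    rcases lt_or_eq_of_le h0 with h | h
    · omega
    · exact absurd hμI (h ▸ h0I)
  obtain ⟨b, hb⟩ := hSfin.bddAbove
  have hlarge : ∀ N : ℤ, ∃ T ∈ I, N ≤ T ∧ μ ≤ T := by
    intro N
    set z : ℤ := max N 0 + max b 0 + 1 with hzdef
    have hz0 : 0 ≤ z := by
      have := le_max_right N 0; have := le_max_right b 0; omega
    have hzS : z ∈ S := by
      by_contra hzS
      have : z ≤ b := hb ⟨hz0, hzS⟩
      have := le_max_left b 0; omega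
    refine ⟨μ + z, hIadd μ hμI z hzS, ?_, by omega⟩
    have := le_max_left N 0; omega
  -- the value on the constant μ sequence
  have hconst : (∑ i, a i) * μ + a₀ ∈ I := by
    have := hendo (fun _ => μ) (antitone_const) (fun _ => hμI)
    simpa [Finset.sum_mul] using this
  have hconst1 : 1 ≤ (∑ i, a i) * μ + a₀ := le_trans hμpos (hμlb hconst)
  -- the total sum is handled via a constant large sequence
  have htot : a₀ ≤ 0 → 0 < ∑ i, a i := by
    intro ha0
    by_contra hA
    push_neg at hA
    obtain ⟨T, hTI, _, hTμ⟩ := hlarge 0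
    have hval : (∑ i, a i) * T + a₀ ∈ I := by
      have := hendo (fun _ => T) (antitone_const) (fun _ => hTI)
      simpa [Finset.sum_mul] using this
    have h1 : μ ≤ (∑ i, a i) * T + a₀ := hμlb hval
    nlinarith [mul_nonpos_of_nonpos_of_nonneg hA (by omega : (0:ℤ) ≤ T)]
  refine ⟨?_, by omega, ?_⟩
  · intro k hk1 hkn
    by_contra hA
    push_neg at hA
    set A : ℤ := ∑ i ∈ Finset.univ.filter (fun i : Fin n => (i : ℕ) < k), a i with hAdef
    set B : ℤ := ∑ i ∈ Finset.univ.filter (fun i : Fin n => ¬ (i : ℕ) < k), a i with hBdef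
    obtain ⟨T, hTI, hTN, hTμ⟩ := hlarge (max μ (B * μ + a₀ + 1))
    have hTb : B * μ + a₀ + 1 ≤ T := le_trans (le_max_right _ _) hTN
    set s : Fin n → ℤ := fun i => if (i : ℕ) < k then T else μ with hsdef
    have hanti : Antitone s := by
      intro i j hij
      simp only [hsdef]
      by_cases hj : (j : ℕ) < k
      · have : (i : ℕ) < k := lt_of_le_of_lt (Fin.le_def.mp hij) hj
        simp [hj, this]
      · by_cases hi : (i : ℕ) < k <;> simp [hi, hj, hTμ]
    have hmem : ∀ i, s i ∈ I := by
      intro i; simp only [hsdef]; split <;> [exact hTI; exact hμI]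
    have hval := hendo s hanti hmem
    have hsum : ∑ i, a i * s i = A * T + B * μ := by
      simp only [hsdef, mul_ite]
      rw [Finset.sum_ite, ← Finset.sum_mul, ← Finset.sum_mul]
    rw [hsum] at hval
    have h1 : μ ≤ A * T + B * μ + a₀ := hμlb hval
    have hA1 : A ≤ -1 := by omega
    nlinarith [mul_le_mul_of_nonneg_right hA1 (by omega : (0:ℤ) ≤ T)]
  · by_cases ha0 : 0 < a₀
    · exact Or.inl ha0
    · exact Or.inr ⟨htot (by omega), by omega⟩
end

section
/- Let p(X₁,…,Xₙ) = a₁X₁ + ⋯ + aₙXₙ + a₀ be a linear pattern admitted by the maximal ideal M(S) of a numerical semigroup S. Then p is an endopattern of M(S), i.e., p(M(S)) ⊆ M(S), if and only if a₀ > 0, or both a₁ + ⋯ + aₙ > 0 and (a₁ + ⋯ + aₙ)·m(S) + a₀ > 0. -/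
open Finset

lemma aux_sum : ∀ (n : ℕ) (b t : ℕ → ℤ),
    (∀ k ≤ n, 0 ≤ ∑ i ∈ Finset.range k, b i) →
    (∀ i j, i ≤ j → j < n → t j ≤ t i) →
    (∀ i < n, 0 ≤ t i) →
    0 ≤ ∑ i ∈ Finset.range n, b i * t i := by
  intro n
  induction n with
  | zero => intro b t _ _ _; simp
  | succ n ih =>
    intro b t hps hmono hpos
    have e1 : ∑ i ∈ Finset.range (n+1), b i * t i
        = ∑ i ∈ Finset.range (n+1), b i * (t i - t n)
          + (∑ i ∈ Finset.range (n+1), b i) * t n := by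
      rw [Finset.sum_mul, ← Finset.sum_add_distrib]
      exact Finset.sum_congr rfl fun i _ => by ring
    have e2 : ∑ i ∈ Finset.range (n+1), b i * (t i - t n)
        = ∑ i ∈ Finset.range n, b i * (t i - t n) := by
      rw [Finset.sum_range_succ]; simp
    rw [e1, e2]
    have h1 : 0 ≤ ∑ i ∈ Finset.range n, b i * (t i - t n) := by
      apply ih b (fun i => t i - t n)
      · exact fun k hk => hps k (hk.trans n.le_succ)
      · intro i j hij hj
        have := hmono i j hij (hj.trans n.lt_succ_self)
        omega
      · intro i hi
        have := hmono i n (le_of_lt hi) n.lt_succ_self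
        omega
    have h2 : 0 ≤ (∑ i ∈ Finset.range (n+1), b i) * t n :=
      mul_nonneg (hps (n+1) le_rfl) (hpos n n.lt_succ_self)
    linarith


/-- A linear pattern admitted by the maximal ideal `M(S) = S \ {0}` of a numerical
semigroup `S` is an endopattern of `M(S)` iff `a₀ > 0`, or both `∑ aᵢ > 0` and
`(∑ aᵢ)·m(S) + a₀ > 0`. -/
theorem stmt9 {n : ℕ} (a : Fin n → ℤ) (a₀ : ℤ) (S : Set ℤ) (m : ℤ)
    (hS : IsNumericalSemigroup S) (hm : IsLeast (S \ {0}) m)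
    (hadm : AdmittedBy a a₀ (S \ {0}) S) :
    AdmittedBy a a₀ (S \ {0}) (S \ {0}) ↔
      0 < a₀ ∨ (0 < ∑ i, a i ∧ 0 < (∑ i, a i) * m + a₀) := by
  obtain ⟨hzero, hnonneg, hclosed, hfin⟩ := hS
  obtain ⟨hmM, hmlb⟩ := hm
  have hmS : m ∈ S := hmM.1
  have hm0 : m ≠ 0 := by simpa using hmM.2
  have hm1 : 1 ≤ m := by have := hnonneg m hmS; omega
  -- all large integers are in S \ {0}
  obtain ⟨C, hC⟩ := hfin.bddAbove
  have hbig : ∀ x : ℤ, max C 0 + 1 ≤ x → x ∈ S \ {0} := by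
    intro x hx
    have hx0 : 0 < x := by have := le_max_right C 0; omega
    constructor
    · by_contra hxS
      have : x ∈ {z : ℤ | 0 ≤ z ∧ z ∉ S} := ⟨le_of_lt hx0, hxS⟩
      have := hC this
      have := le_max_left C 0
      omega
    · simp; omega
  set A := ∑ i, a i with hAdef
  set b : ℕ → ℤ := fun j => if h : j < n then a ⟨j, h⟩ else 0 with hbdef
  have hb : ∀ i : Fin n, b ↑i = a i := fun i => by simp [hbdef, i.isLt]
  have hAb : ∑ j ∈ Finset.range n, b j = A := by
    rw [← Fin.sum_univ_eq_sum_range b n]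
    exact Finset.sum_congr rfl fun i _ => hb i
  -- partial sums are nonnegative, by admissibility
  have hps : ∀ k, k ≤ n → 0 ≤ ∑ i ∈ Finset.range k, b i := by
    intro k hk
    by_contra hneg
    push_neg at hneg
    set B := ∑ i ∈ Finset.range k, b i with hBdef
    set x : ℤ := max (max C 0 + 1) (max m (A * m + a₀ + m + 1)) with hxdef
    have hxm : m ≤ x := le_trans (le_max_left m _) (le_max_right _ _)
    have hxc : max C 0 + 1 ≤ x := le_max_left _ _
    have hxv : A * m + a₀ + m + 1 ≤ x := le_trans (le_max_right m _) (le_max_right _ _)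
    set s : Fin n → ℤ := fun i => if (i : ℕ) < k then x else m with hsdef
    have hsanti : Antitone s := by
      intro i j hij
      have hij' : (i : ℕ) ≤ j := hij
      simp only [hsdef]
      split_ifs <;> omega
    have hsM : ∀ i, s i ∈ S \ {0} := by
      intro i
      simp only [hsdef]
      split_ifs
      · exact hbig x hxc
      · exact ⟨hmS, hmM.2⟩
    have hval := hadm s hsanti hsM
    have hge := hnonneg _ hval
    have hterm : ∀ i : Fin n, a i * s i
        = a i * m + (if (i : ℕ) < k then a i else 0) * (x - m) := by
      intro i
      simp only [hsdef]
      split_ifs <;> ring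
    have hsum : ∑ i, a i * s i = A * m + B * (x - m) := by
      rw [Finset.sum_congr rfl fun i _ => hterm i, Finset.sum_add_distrib,
        ← Finset.sum_mul, ← Finset.sum_mul]
      congr 1
      have h1 : ∑ i : Fin n, (if (i : ℕ) < k then a i else 0)
          = ∑ j ∈ Finset.range n, (if j < k then b j else 0) := by
        rw [← Fin.sum_univ_eq_sum_range (fun j => if j < k then b j else 0) n]
        exact Finset.sum_congr rfl fun i _ => by rw [hb]
      have h2 : ∑ j ∈ Finset.range n, (if j < k then b j else 0)
          = ∑ j ∈ Finset.range k, b j := by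
        rw [← Finset.sum_filter]
        congr 1
        ext j
        simp only [Finset.mem_filter, Finset.mem_range]
        omega
      rw [h1, h2]
    rw [hsum] at hge
    have hB1 : B ≤ -1 := by omega
    have : B * (x - m) ≤ (-1) * (x - m) :=
      mul_le_mul_of_nonneg_right hB1 (by omega)
    nlinarith
  have hA : 0 ≤ A := by rw [← hAb]; exact hps n le_rfl
  constructor
  · intro h
    have h1 := h (fun _ => m) (fun _ _ _ => le_refl m) (fun _ => ⟨hmS, hmM.2⟩)
    have hsum : ∑ i : Fin n, a i * m = A * m := by rw [← Finset.sum_mul]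
    rw [hsum] at h1
    have hv0 : A * m + a₀ ≠ 0 := by simpa using h1.2
    have hvnn := hnonneg _ h1.1
    rcases lt_or_ge 0 A with hA' | hA'
    · right; exact ⟨hA', by omega⟩
    · left
      have hA0 : A = 0 := le_antisymm hA' hA
      rw [hA0, zero_mul, zero_add] at hv0 hvnn
      omega
  · intro h s hs hmem
    have hvS : ∑ i, a i * s i + a₀ ∈ S := hadm s hs hmem
    refine ⟨hvS, ?_⟩
    simp only [Set.mem_singleton_iff]
    intro hv0
    rcases h with h0 | ⟨hApos, hAm⟩
    · -- a₀ > 0 : double the sequence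
      have h2M : ∀ i, s i + s i ∈ S \ {0} := by
        intro i
        refine ⟨hclosed _ (hmem i).1 _ (hmem i).1, ?_⟩
        have := hmlb (hmem i)
        simp; omega
      have hs2 : Antitone (fun i => s i + s i) :=
        fun i j hij => add_le_add (hs hij) (hs hij)
      have hval2 := hadm _ hs2 h2M
      have hge2 := hnonneg _ hval2
      have hsum2 : ∑ i, a i * (s i + s i) = 2 * ∑ i, a i * s i := by
        rw [Finset.mul_sum]
        exact Finset.sum_congr rfl fun i _ => by ring
      rw [hsum2] at hge2
      omega
    · -- ∑ aᵢ > 0 case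
      set t : ℕ → ℤ := fun j => if h : j < n then s ⟨j, h⟩ - m else 0 with htdef
      have ht : ∀ i : Fin n, t ↑i = s i - m := fun i => by simp [htdef, i.isLt]
      have hkey : 0 ≤ ∑ j ∈ Finset.range n, b j * t j := by
        apply aux_sum n b t hps
        · intro i j hij hj
          have hi : i < n := lt_of_le_of_lt hij hj
          simp only [htdef, dif_pos hi, dif_pos hj]
          have : s ⟨j, hj⟩ ≤ s ⟨i, hi⟩ := hs (by exact hij)
          omega
        · intro i hi
          simp only [htdef, dif_pos hi]
          have := hmlb (hmem ⟨i, hi⟩)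
          omega
      have heq : ∑ j ∈ Finset.range n, b j * t j = ∑ i, a i * (s i - m) := by
        rw [← Fin.sum_univ_eq_sum_range (fun j => b j * t j) n]
        exact Finset.sum_congr rfl fun i _ => by rw [hb, ht]
      have hsplit : ∑ i, a i * (s i - m) = (∑ i, a i * s i) - A * m := by
        rw [Finset.sum_congr rfl fun (i : Fin n) _ =>
          (show a i * (s i - m) = a i * s i - a i * m by ring),
          Finset.sum_sub_distrib, ← Finset.sum_mul]
      rw [heq, hsplit] at hkey
      omega
end

section
/- Let S be a numerical semigroup with S ≠ ℤ₊ and let a₀ be an integer with a₀ ∉ M(S). Then there is no monic linear pattern p(X₁,…,Xₙ) = a₁X₁ + ⋯ + aₙXₙ + a₀ (with a₁ = 1) admitted by S or by its maximal ideal M(S) satisfying (a₁ + ⋯ + aₙ)·m(S) = max(0, −a₀). -/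
open Finset

/-- If `S ≠ ℤ₊` and `a₀ ∉ M(S)`, there is no monic linear pattern with constant term
`a₀` admitted by `S` or by `M(S)` satisfying `(∑ aᵢ)·m(S) = max(0, −a₀)`. -/
theorem stmt10 (S : Set ℤ) (hS : IsNumericalSemigroup S)
    (hSne : S ≠ {z : ℤ | 0 ≤ z}) (m : ℤ) (hm : IsLeast (S \ {0}) m)
    (a₀ : ℤ) (ha₀ : a₀ ∉ S \ {0})
    {n : ℕ} (hn : 0 < n) (a : Fin n → ℤ) (hmonic : a ⟨0, hn⟩ = 1)
    (hadm : AdmittedBy a a₀ S S ∨ AdmittedBy a a₀ (S \ {0}) S) :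
    (∑ i, a i) * m ≠ max 0 (-a₀) := by
  intro heq
  obtain ⟨h0, hpos, hadd, hfin⟩ := hS
  obtain ⟨⟨hmS, hm0⟩, hmle⟩ := hm
  have hm0' : m ≠ 0 := by simpa using hm0
  have hm1 : 1 ≤ m := by have := hpos m hmS; omega
  have hadm' : ∀ s : Fin n → ℤ, Antitone s → (∀ i, s i ∈ S \ {0}) →
      ∑ i, a i * s i + a₀ ∈ S := by
    rcases hadm with h | h
    · exact fun s hs hsi => h s hs (fun i => (hsi i).1)
    · exact h
  by_cases ha : 0 < a₀
  · have hv := hadm' (fun _ => m) antitone_const (fun i => ⟨hmS, hm0⟩)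
    rw [← Finset.sum_mul, heq] at hv
    have hmax : max 0 (-a₀) = 0 := by omega
    rw [hmax, zero_add] at hv
    exact ha₀ ⟨hv, by simpa using ha.ne'⟩
  · -- a₀ ≤ 0
    have hne : {z : ℤ | 0 ≤ z ∧ z ∉ S}.Nonempty := by
      rcases Set.not_subset.mp (fun h => hSne (Set.Subset.antisymm hpos h)) with ⟨z, hz1, hz2⟩
      exact ⟨z, hz1, hz2⟩
    obtain ⟨F, hFmem, hFmax⟩ := hfin.exists_maximalFor id _ hne
    have hFgap : F ∉ S := hFmem.2
    have hF0 : 0 ≤ F := hFmem.1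
    have hbig : ∀ z : ℤ, F < z → z ∈ S := by
      intro z hz
      by_contra hzS
      have := @hFmax z ⟨by omega, hzS⟩ (le_of_lt hz)
      simp only [id] at this
      omega
    have hFm : F + m ∈ S := hbig (F + m) (by omega)
    set s : Fin n → ℤ := fun i => if (i : ℕ) = 0 then F + m else m with hs
    have hanti : Antitone s := by
      intro i j hij
      simp only [hs]
      by_cases hi : (i : ℕ) = 0 <;> by_cases hj : (j : ℕ) = 0 <;> simp [hi, hj] <;> omega
    have hmem : ∀ i, s i ∈ S \ {0} := by
      intro i
      simp only [hs]
      by_cases hi : (i : ℕ) = 0 <;> simp [hi]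
      · exact ⟨hFm, by omega⟩
      · exact ⟨hmS, hm0'⟩
    have hv := hadm' s hanti hmem
    have hsum : ∑ i, a i * s i = (∑ i, a i) * m + F := by
      have : ∀ i : Fin n, a i * s i =
          a i * m + (if i = ⟨0, hn⟩ then a i * F else 0) := by
        intro i
        by_cases hi : i = ⟨0, hn⟩
        · subst hi; simp [hs]; ring
        · have : (i : ℕ) ≠ 0 := fun h => hi (Fin.ext h)
          simp [hs, this, hi]
      rw [Finset.sum_congr rfl (fun i _ => this i), Finset.sum_add_distrib,
        Finset.sum_ite_eq' Finset.univ (⟨0, hn⟩ : Fin n), ← Finset.sum_mul]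
      simp [hmonic]
    rw [hsum, heq] at hv
    have : max 0 (-a₀) + F + a₀ = F := by omega
    rw [this] at hv
    exact hFgap hv
end

section
/- Let S be a numerical semigroup with S ≠ ℤ₊. Then every monic linear pattern p(X₁,…,Xₙ) = a₁X₁ + ⋯ + aₙXₙ + a₀ (with a₁ = 1) admitted by the maximal ideal M(S) is an endopattern of M(S), i.e., p(M(S)) ⊆ M(S). -/
open Finset

/-- If `S ≠ ℤ₊`, every monic linear pattern admitted by the maximal ideal
`M(S) = S \ {0}` is an endopattern of `M(S)`. -/
theorem stmt11 (S : Set ℤ) (hS : IsNumericalSemigroup S)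
    (hSne : S ≠ {z : ℤ | 0 ≤ z})
    {n : ℕ} (hn : 0 < n) (a : Fin n → ℤ) (a₀ : ℤ) (hmonic : a ⟨0, hn⟩ = 1)
    (hadm : AdmittedBy a a₀ (S \ {0}) S) :
    AdmittedBy a a₀ (S \ {0}) (S \ {0}) := by
  obtain ⟨h0, hpos, hadd, hfin⟩ := hS
  intro s hmono hmem
  refine ⟨hadm s hmono hmem, ?_⟩
  intro hzero
  have hzero' : ∑ i, a i * s i + a₀ = 0 := hzero
  -- gaps nonempty
  have hGne : {z : ℤ | 0 ≤ z ∧ z ∉ S}.Nonempty := by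
    by_contra h
    rw [Set.not_nonempty_iff_eq_empty] at h
    apply hSne
    ext z
    constructor
    · exact fun hz => hpos z hz
    · intro hz
      by_contra hzS
      exact Set.eq_empty_iff_forall_notMem.mp h z ⟨hz, hzS⟩
  have hGne' : hfin.toFinset.Nonempty := by
    rwa [Set.Finite.toFinset_nonempty]
  set F := hfin.toFinset.max' hGne' with hFdef
  have hFmem : F ∈ hfin.toFinset := Finset.max'_mem _ _
  rw [Set.Finite.mem_toFinset] at hFmem
  obtain ⟨hF0, hFnS⟩ := hFmem
  have hs1 := hmem ⟨0, hn⟩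
  have hs1pos : 0 < s ⟨0, hn⟩ := by
    rcases hs1 with ⟨hsS, hsne⟩
    rcases lt_or_eq_of_le (hpos _ hsS) with h | h
    · exact h
    · exact absurd h.symm hsne
  -- shifted sequence
  set s' : Fin n → ℤ := fun i => s i + if (i : ℕ) = 0 then F else 0 with hs'def
  have hmono' : Antitone s' := by
    intro i j hij
    have hij' : (i : ℕ) ≤ (j : ℕ) := hij
    simp only [hs'def]
    by_cases hi : (i : ℕ) = 0
    · by_cases hj : (j : ℕ) = 0
      · simp only [hi, hj, if_pos]
        have := hmono hij
        linarith
      · simp only [hi, hj, if_pos, if_neg, if_true, if_false]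
        have := hmono hij
        linarith
    · have hj : (j : ℕ) ≠ 0 := by omega
      simp only [hi, hj, if_neg, if_false, add_zero]
      exact hmono hij
  have hmem' : ∀ i, s' i ∈ S \ {0} := by
    intro i
    by_cases hi : (i : ℕ) = 0
    · have hieq : i = ⟨0, hn⟩ := Fin.ext hi
      have hsplit : s' i = s ⟨0, hn⟩ + F := by
        simp [hs'def, hieq]
      rw [hsplit]
      constructor
      · by_contra hns
        have hmemG : s ⟨0, hn⟩ + F ∈ hfin.toFinset := by
          rw [Set.Finite.mem_toFinset]
          exact ⟨by linarith, hns⟩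
        have hle := Finset.le_max' _ _ hmemG
        rw [← hFdef] at hle
        linarith
      · intro h
        simp only [Set.mem_singleton_iff] at h
        linarith
    · have hsplit : s' i = s i := by simp [hs'def, hi]
      rw [hsplit]
      exact hmem i
  have hval := hadm s' hmono' hmem'
  have hsum : ∑ i, a i * s' i = ∑ i, a i * s i + F := by
    have hrw : ∀ i : Fin n, a i * s' i = a i * s i + (if i = ⟨0, hn⟩ then a i * F else 0) := by
      intro i
      simp only [hs'def, mul_add]
      congr 1
      by_cases hi : i = ⟨0, hn⟩
      · subst hi; simp
      · have : (i : ℕ) ≠ 0 := by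
          intro h; exact hi (Fin.ext h)
        simp [this, hi]
    rw [Finset.sum_congr rfl (fun i _ => hrw i), Finset.sum_add_distrib,
      Finset.sum_ite_eq' Finset.univ ⟨0, hn⟩ (fun i => a i * F)]
    simp [hmonic]
  rw [hsum] at hval
  have : (F : ℤ) ∈ S := by
    have : ∑ i, a i * s i + F + a₀ = F := by linarith
    rwa [this] at hval
  exact hFnS this
end

section
/- Let I be a proper ideal of a numerical semigroup S, let μ(I) = min I, and let p(X₁,…,Xₙ) = a₁X₁ + ⋯ + aₙXₙ + a₀ be a linear pattern. (i) If p is a surjective endopattern of I, i.e., p is admitted by I and p(I) = I, then a₀ = −((a₁ + ⋯ + aₙ) − 1)·μ(I). (ii) Conversely, if p is premonic, p is an endopattern of I (p(I) ⊆ I), and a₀ = −((a₁ + ⋯ + aₙ) − 1)·μ(I), then p(I) = I. -/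
open Finset

/-- Abel-summation positivity: if all partial sums of `a` up to `n` are nonnegative and
`t` is a nonnegative antitone sequence, then `∑_{i<n} a i * t i ≥ 0`. -/
lemma abel_nonneg (a : ℕ → ℤ) : ∀ n : ℕ, (∀ k, k ≤ n → 0 ≤ ∑ i ∈ Finset.range k, a i) →
    ∀ t : ℕ → ℤ, (∀ i j, i ≤ j → t j ≤ t i) → (∀ i, 0 ≤ t i) →
    0 ≤ ∑ i ∈ Finset.range n, a i * t i := by
  intro n
  induction n with
  | zero => simp
  | succ n IH =>
    intro hA t ht ht0
    have h1 : 0 ≤ ∑ i ∈ Finset.range n, a i * (t (min i n) - t n) := by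
      refine IH (fun k hk => hA k (le_trans hk (Nat.le_succ n)))
        (fun i => t (min i n) - t n) (fun i j hij => ?_) (fun i => ?_)
      · have := ht (min i n) (min j n) (by omega)
        linarith
      · have := ht (min i n) n (min_le_right i n)
        linarith
    have h2 : ∑ i ∈ Finset.range n, a i * (t (min i n) - t n)
        = ∑ i ∈ Finset.range n, a i * t i - (∑ i ∈ Finset.range n, a i) * t n := by
      rw [Finset.sum_mul, ← Finset.sum_sub_distrib]
      refine Finset.sum_congr rfl (fun i hi => ?_)
      rw [Finset.mem_range] at hi
      rw [min_eq_left hi.le]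
      ring
    have h3 := hA (n+1) le_rfl
    rw [Finset.sum_range_succ] at h3 ⊢
    have h4 := ht0 n
    nlinarith [h1, h2.symm]

/-- (i) A linear surjective endopattern of a proper ideal `I` satisfies
`a₀ = −((∑ aᵢ) − 1)·μ(I)`.  (ii) Conversely a premonic endopattern of `I` with
`a₀ = −((∑ aᵢ) − 1)·μ(I)` is surjective. -/
theorem stmt12 {n : ℕ} (a : Fin n → ℤ) (a₀ : ℤ) (S I : Set ℤ) (μ : ℤ)
    (hS : IsNumericalSemigroup S) (hI : IsIdealOf I S) (hproper : I ≠ S)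
    (hμ : IsLeast I μ) :
    ((AdmittedBy a a₀ I S ∧ patternImage a a₀ I = I) →
        a₀ = -((∑ i, a i) - 1) * μ) ∧
    ((Premonic a ∧ patternImage a a₀ I ⊆ I ∧ a₀ = -((∑ i, a i) - 1) * μ) →
        patternImage a a₀ I = I) := by
  obtain ⟨hS0, hSnn, hSadd, hSfin⟩ := hS
  obtain ⟨hIne, hIS, hIadd⟩ := hI
  have hμI : μ ∈ I := hμ.1
  have hμ0 : 0 ≤ μ := hSnn μ (hIS hμI)
  constructor
  · rintro ⟨hadm, himg⟩
    -- S contains all sufficiently large integers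
    obtain ⟨B, hB⟩ := hSfin.bddAbove
    rw [mem_upperBounds] at hB
    have hbig : ∀ m : ℤ, B < m → 0 ≤ m → m ∈ S := by
      intro m h1 h2
      by_contra hm
      exact absurd (hB m ⟨h2, hm⟩) (not_le.mpr h1)
    -- all partial sums of coefficients are nonnegative
    have hP : ∀ k : ℕ,
        0 ≤ ∑ i ∈ Finset.univ.filter (fun i : Fin n => (i : ℕ) < k), a i := by
      intro k
      by_contra hneg
      push_neg at hneg
      set P : ℤ := ∑ i ∈ Finset.univ.filter (fun i : Fin n => (i : ℕ) < k), a i with hPdef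
      have hP1 : P ≤ -1 := by omega
      set m : ℤ := max (max (B + 1) 0) ((∑ i, a i * μ) + a₀ + 1) with hmdef
      have hm0 : 0 ≤ m := le_trans (le_max_right _ _) (le_max_left _ _)
      have hmS : m ∈ S := hbig m
        (lt_of_lt_of_le (by linarith [le_max_left (B+1) (0:ℤ)])
          (le_max_left _ _)) hm0
      have hmbig : (∑ i, a i * μ) + a₀ + 1 ≤ m := le_max_right _ _
      have hanti : Antitone (fun i : Fin n => if (i : ℕ) < k then μ + m else μ) := by
        intro i j hij
        have hij' : (i : ℕ) ≤ j := hij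
        dsimp only
        by_cases hj : (j : ℕ) < k
        · rw [if_pos hj, if_pos (lt_of_le_of_lt hij' hj)]
        · rw [if_neg hj]
          split <;> linarith
      have hmem : ∀ i : Fin n, (if (i : ℕ) < k then μ + m else μ) ∈ I := by
        intro i
        split
        · exact hIadd μ hμI m hmS
        · exact hμI
      have hval := hadm _ hanti hmem
      have hcalc : ∑ i, a i * (if (i : ℕ) < k then μ + m else μ)
          = (∑ i, a i * μ) + P * m := by
        rw [hPdef, Finset.sum_mul, Finset.sum_filter, ← Finset.sum_add_distrib]
        refine Finset.sum_congr rfl (fun i _ => ?_)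
        by_cases h : (i : ℕ) < k <;> simp [h] <;> ring
      rw [hcalc] at hval
      have hval0 : 0 ≤ (∑ i, a i * μ) + P * m + a₀ := hSnn _ hval
      nlinarith
    -- every value of the pattern is at least (∑ a) μ + a₀
    have hlow : ∀ y ∈ patternImage a a₀ I, (∑ i, a i) * μ + a₀ ≤ y := by
      rintro y ⟨s, hs1, hs2, rfl⟩
      set aN : ℕ → ℤ := fun i => if h : i < n then a ⟨i, h⟩ else 0 with haN
      set tN : ℕ → ℤ := fun i => if h : i < n then s ⟨i, h⟩ - μ else 0 with htN
      have hpart : ∀ k, k ≤ n → 0 ≤ ∑ i ∈ Finset.range k, aN i := by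
        intro k hk
        have : ∑ i ∈ Finset.range k, aN i
            = ∑ i ∈ Finset.univ.filter (fun i : Fin n => (i : ℕ) < k), a i := by
          rw [Finset.sum_filter]
          rw [show Finset.range k
              = (Finset.range n).filter (· < k) by ext x; simp; omega]
          rw [Finset.sum_filter]
          rw [← Fin.sum_univ_eq_sum_range (fun i => if i < k then aN i else 0) n]
          refine Finset.sum_congr rfl (fun i _ => ?_)
          by_cases h : (i : ℕ) < k <;> simp [h, haN, i.isLt]
        rw [this]
        exact hP k
      have htanti : ∀ i j : ℕ, i ≤ j → tN j ≤ tN i := by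
        intro i j hij
        by_cases hi : i < n
        · by_cases hj : j < n
          · simp only [htN, dif_pos hi, dif_pos hj]
            have : s ⟨j, hj⟩ ≤ s ⟨i, hi⟩ := hs1 (by exact hij)
            linarith
          · simp only [htN, dif_pos hi, dif_neg hj]
            linarith [hμ.2 (hs2 ⟨i, hi⟩)]
        · have hj : ¬ j < n := by omega
          simp [htN, hi, hj]
      have htnn : ∀ i : ℕ, 0 ≤ tN i := by
        intro i
        by_cases hi : i < n
        · simp only [htN, dif_pos hi]
          linarith [hμ.2 (hs2 ⟨i, hi⟩)]
        · simp [htN, hi]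
      have habel := abel_nonneg aN n hpart tN htanti htnn
      have heq : ∑ i ∈ Finset.range n, aN i * tN i
          = ∑ i, a i * s i - (∑ i, a i) * μ := by
        rw [← Fin.sum_univ_eq_sum_range (fun i => aN i * tN i) n,
          Finset.sum_mul, ← Finset.sum_sub_distrib]
        refine Finset.sum_congr rfl (fun i _ => ?_)
        simp only [haN, htN, dif_pos i.isLt, Fin.eta]
        ring
      rw [heq] at habel
      linarith
    -- the value at the constant sequence μ belongs to I
    have hcI : (∑ i, a i) * μ + a₀ ∈ I := by
      rw [← himg]
      exact ⟨fun _ => μ, antitone_const, fun _ => hμI, by rw [Finset.sum_mul]⟩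
    have h1 : μ ≤ (∑ i, a i) * μ + a₀ := hμ.2 hcI
    have h2 : μ ∈ patternImage a a₀ I := by rw [himg]; exact hμI
    have h3 := hlow μ h2
    linarith [h3, h1]
  · rintro ⟨⟨k, hk1, hkn, hsum⟩, hsub, ha₀⟩
    refine Set.Subset.antisymm hsub (fun x hx => ?_)
    have hxμ : μ ≤ x := hμ.2 hx
    refine ⟨fun i : Fin n => if (i : ℕ) < k then x else μ, ?_, ?_, ?_⟩
    · intro i j hij
      have hij' : (i : ℕ) ≤ j := hij
      dsimp only
      by_cases hj : (j : ℕ) < k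
      · rw [if_pos hj, if_pos (lt_of_le_of_lt hij' hj)]
      · rw [if_neg hj]
        split <;> linarith
    · intro i
      dsimp only
      split
      · exact hx
      · exact hμI
    · dsimp only
      have hcalc : ∑ i, a i * (if (i : ℕ) < k then x else μ)
          = (∑ i ∈ Finset.univ.filter (fun i : Fin n => (i : ℕ) < k), a i) * x
          + (∑ i ∈ Finset.univ.filter (fun i : Fin n => ¬ (i : ℕ) < k), a i) * μ := by
        rw [Finset.sum_mul, Finset.sum_mul, ← Finset.sum_ite]
        refine Finset.sum_congr rfl (fun i _ => ?_)
        by_cases h : (i : ℕ) < k <;> simp [h]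
      have hnot : ∑ i ∈ Finset.univ.filter (fun i : Fin n => ¬ (i : ℕ) < k), a i
          = (∑ i, a i) - 1 := by
        have := Finset.sum_filter_add_sum_filter_not Finset.univ
          (fun i : Fin n => (i : ℕ) < k) a
        rw [hsum] at this
        linarith
      rw [hcalc, hsum, hnot, ha₀]
      ring
end

section
/- Let I and J be ideals of a numerical semigroup S with J proper, and let μ(J) = min J. Then there exists d₀ ≥ 1 such that for all d ≥ d₀ the set PF^d(I,J) is finite with exactly μ(J) elements. -/
open Finset

open Pointwise

/-- The `d`-fold sumset `dJ`, with `0J = {0}`. -/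
def foldSum (J : Set ℤ) : ℕ → Set ℤ
  | 0 => {0}
  | d + 1 => foldSum J d + J

/-- `PF^d(I,J) = (I − dJ) \ (I − (d−1)J)`. -/
def PFset (I J : Set ℤ) (d : ℕ) : Set ℤ :=
  {z : ℤ | ∀ k ∈ foldSum J d, z + k ∈ I} \
    {z : ℤ | ∀ k ∈ foldSum J (d - 1), z + k ∈ I}


lemma zero_mem_foldSum {A : Set ℤ} (h0 : (0:ℤ) ∈ A) : ∀ d, (0:ℤ) ∈ foldSum A d
  | 0 => Set.mem_singleton 0
  | d + 1 => by
      have := Set.add_mem_add (zero_mem_foldSum h0 d) h0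
      simpa [foldSum] using this

lemma foldSum_nonneg {A : Set ℤ} (hA : ∀ a ∈ A, 0 ≤ a) :
    ∀ d, ∀ x ∈ foldSum A d, 0 ≤ x
  | 0 => by intro x hx; simp [foldSum] at hx; omega
  | d + 1 => by
      intro x hx
      rcases Set.mem_add.1 hx with ⟨a, ha, b, hb, hab⟩
      have h1 := foldSum_nonneg hA d a ha
      have h2 := hA b hb
      omega

lemma foldSum_succ_mono {A : Set ℤ} (h0 : (0:ℤ) ∈ A) (d : ℕ) :
    foldSum A d ⊆ foldSum A (d+1) := by
  intro x hx
  have := Set.add_mem_add hx h0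
  simpa [foldSum] using this

lemma foldSum_mono {A : Set ℤ} (h0 : (0:ℤ) ∈ A) {d e : ℕ} (h : d ≤ e) :
    foldSum A d ⊆ foldSum A e := by
  induction e, h using Nat.le_induction with
  | base => exact subset_rfl
  | succ e he ih => exact fun x hx => foldSum_succ_mono h0 e (ih hx)

lemma subset_foldSum {A : Set ℤ} (h0 : (0:ℤ) ∈ A) {d : ℕ} (hd : 1 ≤ d) :
    A ⊆ foldSum A d := by
  have h1 : A ⊆ foldSum A 1 := by
    intro a ha
    exact Set.mem_add.2 ⟨0, Set.mem_singleton 0, a, ha, zero_add a⟩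
  exact h1.trans (foldSum_mono h0 hd)

lemma foldSum_shift (J : Set ℤ) (μ : ℤ) :
    ∀ d : ℕ, ∀ x : ℤ, x ∈ foldSum J d ↔ x - d*μ ∈ foldSum {y : ℤ | y + μ ∈ J} d
  | 0, x => by simp [foldSum]
  | d + 1, x => by
    constructor
    · intro hx
      rcases Set.mem_add.1 hx with ⟨a, ha, b, hb, hab⟩
      have ha' := (foldSum_shift J μ d a).1 ha
      refine Set.mem_add.2 ⟨a - d*μ, ha', b - μ, ?_, ?_⟩
      · show (b - μ) + μ ∈ J; simpa using hb
      · push_cast; linarith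
    · intro hx
      rcases Set.mem_add.1 hx with ⟨a, ha, b, hb, hab⟩
      have ha' := (foldSum_shift J μ d (a + d*μ)).2 (by simpa using ha)
      refine Set.mem_add.2 ⟨a + d*μ, ha', b + μ, hb, ?_⟩
      push_cast at hab ⊢; linarith

lemma foldSum_stab (A : Set ℤ) (N : ℤ) (h0 : (0:ℤ) ∈ A) (hnn : ∀ a ∈ A, 0 ≤ a)
    (hN : ∀ z : ℤ, N ≤ z → z ∈ A) :
    ∃ d₁ : ℕ, 1 ≤ d₁ ∧ ∀ d, d₁ ≤ d → foldSum A d = foldSum A d₁ := by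
  classical
  set f : ℤ → ℕ := fun s => if h : ∃ d, s ∈ foldSum A d then Nat.find h else 0 with hf
  set d₁ : ℕ := (Finset.Ico (0:ℤ) N).sup f + 1 with hd₁
  have hstep : foldSum A (d₁ + 1) ⊆ foldSum A d₁ := by
    intro x hx
    rcases le_or_gt N x with hxN | hxN
    · exact subset_foldSum h0 (by omega) (hN x hxN)
    · have hx0 : 0 ≤ x := foldSum_nonneg hnn _ x hx
      have hmem : x ∈ Finset.Ico (0:ℤ) N := Finset.mem_Ico.2 ⟨hx0, hxN⟩
      have hex : ∃ d, x ∈ foldSum A d := ⟨d₁+1, hx⟩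
      have h1 : f x = Nat.find hex := by simp only [hf, dif_pos hex]
      have h2 : f x ≤ d₁ := le_trans (Finset.le_sup hmem) (by omega)
      have h3 : x ∈ foldSum A (f x) := by rw [h1]; exact Nat.find_spec hex
      exact foldSum_mono h0 h2 h3
  refine ⟨d₁, by omega, ?_⟩
  intro d hd
  induction d, hd using Nat.le_induction with
  | base => rfl
  | succ d hd ih =>
    apply Set.Subset.antisymm
    · have h4 : foldSum A (d+1) = foldSum A d + A := rfl
      rw [h4, ih]
      exact hstep
    · exact foldSum_mono h0 (by omega)


lemma count_W (U : Set ℤ) (μ B : ℤ) (hμpos : 0 < μ)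
    (hU0 : ∀ u ∈ U, 0 ≤ u) (hUB : ∀ z : ℤ, B ≤ z → z ∈ U)
    (hUμ : ∀ u ∈ U, u + μ ∈ U) :
    {u : ℤ | u ∈ U ∧ u - μ ∉ U}.Finite ∧
      {u : ℤ | u ∈ U ∧ u - μ ∉ U}.ncard = μ.toNat := by
  classical
  set W := {u : ℤ | u ∈ U ∧ u - μ ∉ U} with hW
  have hmul : ∀ u ∈ U, ∀ n : ℕ, u + n * μ ∈ U := by
    intro u hu n
    induction n with
    | zero => simpa using hu
    | succ n ih =>
      have h1 := hUμ _ ih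
      have h2 : u + ↑n * μ + μ = u + ↑(n+1) * μ := by push_cast; ring
      rwa [h2] at h1
  have hfin : W.Finite := by
    apply (Set.finite_Ico (0:ℤ) (B + μ)).subset
    rintro u ⟨hu, hnu⟩
    refine ⟨hU0 u hu, ?_⟩
    by_contra h
    push_neg at h
    exact hnu (hUB _ (by linarith))
  refine ⟨hfin, ?_⟩
  have key : ∀ u v : ℤ, u ∈ W → v ∈ W → u % μ = v % μ → u < v → False := by
    intro u v hu hv h hlt
    have hdvd : μ ∣ v - u := Int.ModEq.dvd (h : Int.ModEq μ u v)
    obtain ⟨c, hc⟩ := hdvd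
    have hc1 : 1 ≤ c := by nlinarith
    have he : v - μ = u + ((c - 1).toNat : ℤ) * μ := by
      rw [Int.toNat_of_nonneg (by omega)]
      linear_combination hc
    have hvU : v - μ ∈ U := by
      rw [he]
      exact hmul u hu.1 _
    exact hv.2 hvU
  have hbij : Set.BijOn (fun u => u % μ) W (Set.Ico 0 μ) := by
    refine ⟨?_, ?_, ?_⟩
    · intro u _
      exact ⟨Int.emod_nonneg u hμpos.ne', Int.emod_lt_of_pos u hμpos⟩
    · intro u hu v hv h
      rcases lt_trichotomy u v with hlt | he | hlt
      · exact (key u v hu hv h hlt).elim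
      · exact he
      · exact (key v u hv hu h.symm hlt).elim
    · intro r hr
      obtain ⟨hr0, hrμ⟩ := hr
      have hne : ∃ z : ℤ, z ∈ U ∧ z % μ = r := by
        refine ⟨r + μ * (max B 0), hUB _ ?_, ?_⟩
        · have h1 := le_max_left B 0
          have h2 := le_max_right B 0
          nlinarith
        · rw [Int.add_mul_emod_self_left]
          exact Int.emod_eq_of_lt hr0 hrμ
      have hbdd : ∃ b : ℤ, ∀ z : ℤ, (z ∈ U ∧ z % μ = r) → b ≤ z :=
        ⟨0, fun z hz => hU0 z hz.1⟩
      obtain ⟨lb, ⟨hlbU, hlbr⟩, hlb⟩ := Int.exists_least_of_bdd hbdd hne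
      refine ⟨lb, ⟨hlbU, ?_⟩, hlbr⟩
      intro hcon
      have hmem : lb - μ ∈ U ∧ (lb - μ) % μ = r := by
        refine ⟨hcon, ?_⟩
        rw [show lb - μ = lb + μ * (-1) by ring, Int.add_mul_emod_self_left]
        exact hlbr
      have := hlb _ hmem
      omega
  calc W.ncard = ((fun u => u % μ) '' W).ncard := (Set.ncard_image_of_injOn hbij.injOn).symm
    _ = (Set.Ico 0 μ).ncard := by rw [hbij.image_eq]
    _ = μ.toNat := by
        rw [← Finset.coe_Ico, Set.ncard_coe_finset, Int.card_Ico]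
        omega

/-- For ideals `I`, `J` of a numerical semigroup `S` with `J` proper, for all large
enough `d ≥ 1` the set `PF^d(I,J)` has exactly `μ(J) = min J` elements. -/
theorem stmt16 (S I J : Set ℤ) (hS : IsNumericalSemigroup S)
    (hI : IsIdealOf I S) (hJ : IsIdealOf J S) (hJproper : J ≠ S)
    (μ : ℤ) (hμ : IsLeast J μ) :
    ∃ d₀ : ℕ, 1 ≤ d₀ ∧ ∀ d : ℕ, d₀ ≤ d →
      (PFset I J d).Finite ∧ ((PFset I J d).ncard : ℤ) = μ := by
  classical
  have hμS : μ ∈ S := hJ.2.1 hμ.1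
  have hμ0 : 0 ≤ μ := hS.2.1 μ hμS
  have hμpos : 0 < μ := by
    rcases hμ0.lt_or_eq with h | h
    · exact h
    · exfalso
      apply hJproper
      apply Set.Subset.antisymm hJ.2.1
      intro s hs
      have h1 : μ + s ∈ J := hJ.2.2 μ hμ.1 s hs
      rwa [← h, zero_add] at h1
  obtain ⟨b, hb⟩ := (hS.2.2.2).bddAbove
  have hNS : ∀ z : ℤ, max b 0 + 1 ≤ z → z ∈ S := by
    intro z hz
    by_contra hzS
    have h1 := le_max_right b 0
    have h2 := le_max_left b 0
    have hz0 : 0 ≤ z := by omega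
    have h3 : z ≤ b := hb (show z ∈ {z : ℤ | 0 ≤ z ∧ z ∉ S} from ⟨hz0, hzS⟩)
    omega
  set N : ℤ := max b 0 + 1 with hNdef
  have h00 : (0:ℤ) ∈ {y : ℤ | y + μ ∈ J} := by
    show (0:ℤ) + μ ∈ J
    simpa using hμ.1
  have hμJ₀ : μ ∈ {y : ℤ | y + μ ∈ J} := hJ.2.2 μ hμ.1 μ hμS
  have hnnJ₀ : ∀ y ∈ {y : ℤ | y + μ ∈ J}, 0 ≤ y := by
    intro y hy
    have := hμ.2 hy
    omega
  have hNJ₀ : ∀ z : ℤ, N ≤ z → z ∈ {y : ℤ | y + μ ∈ J} := by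
    intro z hz
    show z + μ ∈ J
    have h1 : μ + z ∈ J := hJ.2.2 μ hμ.1 z (hNS z hz)
    rwa [add_comm] at h1
  obtain ⟨d₁, hd₁1, hstab⟩ := foldSum_stab {y : ℤ | y + μ ∈ J} N h00 hnnJ₀ hNJ₀
  set F : Set ℤ := foldSum {y : ℤ | y + μ ∈ J} d₁ with hFdef
  have hF0 : (0:ℤ) ∈ F := zero_mem_foldSum h00 d₁
  have hFnn : ∀ t ∈ F, 0 ≤ t := foldSum_nonneg hnnJ₀ d₁
  have hFμ : ∀ t ∈ F, t + μ ∈ F := by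
    intro t ht
    have h1 : t + μ ∈ foldSum {y : ℤ | y + μ ∈ J} (d₁+1) := Set.add_mem_add ht hμJ₀
    rw [hstab (d₁+1) (by omega)] at h1
    exact h1
  set U : Set ℤ := {z : ℤ | ∀ t ∈ F, z + t ∈ I} with hUdef
  have hU0 : ∀ u ∈ U, 0 ≤ u := by
    intro u hu
    have h1 := hu 0 hF0
    rw [add_zero] at h1
    exact hS.2.1 u (hI.2.1 h1)
  obtain ⟨mI, hmI⟩ := hI.1
  have hIB : ∀ z : ℤ, mI + N ≤ z → z ∈ I := by
    intro z hz
    have h1 : mI + (z - mI) ∈ I := hI.2.2 mI hmI _ (hNS _ (by omega))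
    simpa using h1
  have hUB : ∀ z : ℤ, mI + N ≤ z → z ∈ U := by
    intro z hz t ht
    exact hIB _ (by have := hFnn t ht; omega)
  have hUμ : ∀ u ∈ U, u + μ ∈ U := by
    intro u hu t ht
    have h1 := hu (t + μ) (hFμ t ht)
    have h2 : u + μ + t = u + (t + μ) := by ring
    rwa [h2]
  have hkey : ∀ d : ℕ, d₁ ≤ d →
      {z : ℤ | ∀ k ∈ foldSum J d, z + k ∈ I} = {z : ℤ | z + d * μ ∈ U} := by
    intro d hd
    ext z
    simp only [Set.mem_setOf_eq]
    constructor
    · intro hz t ht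
      have ht2 : t ∈ foldSum {y : ℤ | y + μ ∈ J} d := by
        rw [hstab d hd]; exact ht
      have ht' : (t + d*μ) ∈ foldSum J d :=
        (foldSum_shift J μ d _).2 (by simpa using ht2)
      have h1 := hz _ ht'
      have he : z + (t + ↑d*μ) = z + ↑d*μ + t := by ring
      rwa [he] at h1
    · intro hz k hk
      have hk' : k - ↑d*μ ∈ F := by
        have h3 := (foldSum_shift J μ d k).1 hk
        rw [hstab d hd] at h3
        exact h3
      have h1 := hz _ hk'
      have he : z + ↑d*μ + (k - ↑d*μ) = z + k := by ring
      rwa [he] at h1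
  refine ⟨d₁ + 1, by omega, ?_⟩
  intro d hd
  have hd1 : 1 ≤ d := by omega
  have hcast : ((d - 1 : ℕ) : ℤ) = (d : ℤ) - 1 := by omega
  have hPF : PFset I J d = (fun u => u - (d:ℤ) * μ) '' {u : ℤ | u ∈ U ∧ u - μ ∉ U} := by
    have h1 := hkey d (by omega)
    have h2 := hkey (d - 1) (by omega)
    unfold PFset
    rw [h1, h2]
    ext z
    simp only [Set.mem_diff, Set.mem_setOf_eq, Set.mem_image]
    constructor
    · rintro ⟨hz1, hz2⟩
      refine ⟨z + ↑d*μ, ⟨hz1, ?_⟩, by ring⟩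
      intro hcon
      apply hz2
      have he : z + ((d:ℤ) - 1) * μ = z + ↑d*μ - μ := by ring
      rw [hcast, he]
      exact hcon
    · rintro ⟨u, ⟨hu1, hu2⟩, rfl⟩
      constructor
      · have he : u - ↑d*μ + ↑d*μ = u := by ring
        rw [he]; exact hu1
      · intro hcon
        apply hu2
        rw [hcast] at hcon
        have he : u - ↑d*μ + ((d:ℤ) - 1) * μ = u - μ := by ring
        rwa [he] at hcon
  obtain ⟨hWfin, hWcard⟩ := count_W U μ (mI + N) hμpos hU0 hUB hUμ
  rw [hPF]
  have hinj : Function.Injective (fun u : ℤ => u - (d:ℤ) * μ) := by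
    intro x y h
    simpa using h
  refine ⟨hWfin.image _, ?_⟩
  rw [Set.ncard_image_of_injective _ hinj, hWcard, Int.toNat_of_nonneg hμpos.le]
end

section
/- Let S be a numerical semigroup and let a₁ ≥ a₂ ≥ ⋯ ≥ a_e be elements of S that generate S, i.e., S is the set of all sums n₁a₁ + ⋯ + n_e a_e with n₁,…,n_e nonnegative integers. Let p(X₁,…,X_e) = a₁X₁ + (a₂ − a₁)X₂ + ⋯ + (a_e − a_{e−1})X_e. Then p is a homogeneous linear pattern admitted by ℤ₊ and p(ℤ₊) = S. -/
open Finset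

def extZ {e : ℕ} (f : Fin e → ℤ) : ℕ → ℤ := fun k => if h : k < e then f ⟨k, h⟩ else 0

lemma abelAux (f g : ℕ → ℤ) : ∀ n : ℕ,
    ∑ k ∈ Finset.range n, (f k - if k = 0 then 0 else f (k - 1)) * g k
      = ∑ k ∈ Finset.range n, f k * (g k - g (k + 1))
        + (if n = 0 then 0 else f (n - 1) * g n) := by
  intro n
  induction n with
  | zero => simp
  | succ m ih =>
    rw [Finset.sum_range_succ, Finset.sum_range_succ, ih]
    rcases Nat.eq_zero_or_pos m with h | h
    · subst h; simp; ring
    · have hm : m ≠ 0 := h.ne'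
      simp only [hm, Nat.succ_ne_zero, if_false, Nat.add_sub_cancel]
      ring

lemma convAux {e : ℕ} (a s : Fin e → ℤ) :
    ∑ i : Fin e, (a i - if _ : 0 < (i : ℕ) then
        a ⟨(i : ℕ) - 1, lt_of_le_of_lt (Nat.sub_le _ _) i.isLt⟩ else 0) * s i
      = ∑ k ∈ Finset.range e, extZ a k * (extZ s k - extZ s (k + 1)) := by
  have h1 : ∀ i : Fin e, (a i - if _ : 0 < (i : ℕ) then
      a ⟨(i : ℕ) - 1, lt_of_le_of_lt (Nat.sub_le _ _) i.isLt⟩ else 0) * s i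
      = (fun k => (extZ a k - if k = 0 then 0 else extZ a (k - 1)) * extZ s k) (i : ℕ) := by
    intro i
    simp only [extZ]
    rw [dif_pos i.isLt, dif_pos i.isLt]
    by_cases h : 0 < (i : ℕ)
    · rw [dif_pos h, if_neg h.ne', dif_pos (lt_of_le_of_lt (Nat.sub_le _ _) i.isLt)]
    · rw [dif_neg h, if_pos (Nat.eq_zero_of_not_pos h)]
  rw [Finset.sum_congr rfl (fun i _ => h1 i),
    Fin.sum_univ_eq_sum_range (fun k => (extZ a k - if k = 0 then 0 else extZ a (k - 1)) * extZ s k) e,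
    abelAux]
  have : extZ s e = 0 := by simp [extZ]
  rcases Nat.eq_zero_or_pos e with h | h
  · simp [h]
  · rw [this, if_neg h.ne']; ring

lemma tNonneg {e : ℕ} (s : Fin e → ℤ) (hs : Antitone s) (hpos : ∀ i, 0 ≤ s i) :
    ∀ k, 0 ≤ extZ s k - extZ s (k + 1) := by
  intro k
  simp only [extZ]
  by_cases h : k < e
  · rw [dif_pos h]
    by_cases h2 : k + 1 < e
    · rw [dif_pos h2]
      have := hs (show (⟨k, h⟩ : Fin e) ≤ ⟨k + 1, h2⟩ from by simp [Fin.mk_le_mk])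
      linarith
    · rw [dif_neg h2]
      have := hpos ⟨k, h⟩
      linarith
  · rw [dif_neg h, dif_neg (by omega)]; simp

/-- Any numerical semigroup `S = ⟨a₁,…,a_e⟩` with `a₁ ≥ ⋯ ≥ a_e` is the image of ℤ₊
under the homogeneous pattern `a₁X₁ + (a₂−a₁)X₂ + ⋯ + (a_e−a_{e−1})X_e`, which is
admitted by ℤ₊. -/
theorem stmt17 {e : ℕ} (S : Set ℤ) (hS : IsNumericalSemigroup S) (a : Fin e → ℤ)
    (hanti : Antitone a) (hmem : ∀ i, a i ∈ S)
    (hgen : S = {x : ℤ | ∃ c : Fin e → ℕ, x = ∑ i, (c i : ℤ) * a i}) :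
    (∀ s : Fin e → ℤ, Antitone s → (∀ i, 0 ≤ s i) →
        0 ≤ ∑ i, (a i - if _ : 0 < (i : ℕ) then
            a ⟨(i : ℕ) - 1, lt_of_le_of_lt (Nat.sub_le _ _) i.isLt⟩ else 0) * s i) ∧
    patternImage (fun i : Fin e => a i - if _ : 0 < (i : ℕ) then
        a ⟨(i : ℕ) - 1, lt_of_le_of_lt (Nat.sub_le _ _) i.isLt⟩ else 0) 0
      {z : ℤ | 0 ≤ z} = S := by
  have haN : ∀ k, 0 ≤ extZ a k := by
    intro k
    simp only [extZ]
    by_cases h : k < e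
    · rw [dif_pos h]; exact hS.2.1 _ (hmem _)
    · rw [dif_neg h]
  constructor
  · intro s hs hpos
    rw [convAux]
    exact Finset.sum_nonneg fun k _ => mul_nonneg (haN k) (tNonneg s hs hpos k)
  · ext y
    constructor
    · rintro ⟨s, hs, hsA, rfl⟩
      rw [hgen]
      refine ⟨fun i => (extZ s (i : ℕ) - extZ s ((i : ℕ) + 1)).toNat, ?_⟩
      have hpos : ∀ i, 0 ≤ s i := fun i => hsA i
      rw [add_zero, convAux]
      rw [← Fin.sum_univ_eq_sum_range (fun k => extZ a k * (extZ s k - extZ s (k + 1))) e]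
      refine Finset.sum_congr rfl fun i _ => ?_
      rw [Int.toNat_of_nonneg (tNonneg s hs hpos (i : ℕ)), mul_comm]
      congr 1
      simp [extZ]
    · intro hy
      have hy' := hy
      rw [hgen] at hy'
      obtain ⟨c, rfl⟩ := hy'
      set c' : ℕ → ℤ := extZ (fun i => (c i : ℤ)) with hc'
      have hc'N : ∀ k, 0 ≤ c' k := by
        intro k
        simp only [hc', extZ]
        by_cases h : k < e
        · rw [dif_pos h]; exact Int.natCast_nonneg _
        · rw [dif_neg h]
      set s : Fin e → ℤ := fun i => ∑ k ∈ Finset.Ico (i : ℕ) e, c' k with hsdef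
      have hanti' : Antitone s := by
        intro i j hij
        exact Finset.sum_le_sum_of_subset_of_nonneg
          (Finset.Ico_subset_Ico hij (le_refl e)) (fun k _ _ => hc'N k)
      have hposs : ∀ i, 0 ≤ s i := fun i => Finset.sum_nonneg fun k _ => hc'N k
      refine ⟨s, hanti', fun i => hposs i, ?_⟩
      rw [add_zero, convAux]
      have key : ∀ k, k < e → extZ s k - extZ s (k + 1) = c' k := by
        intro k hk
        have h1 : extZ s k = ∑ j ∈ Finset.Ico k e, c' j := by
          simp only [extZ, dif_pos hk, hsdef]
        have h2 : extZ s (k + 1) = ∑ j ∈ Finset.Ico (k + 1) e, c' j := by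
          by_cases h : k + 1 < e
          · simp only [extZ, dif_pos h, hsdef]
          · have : Finset.Ico (k + 1) e = ∅ := Finset.Ico_eq_empty (by omega)
            simp [extZ, dif_neg h, this]
        rw [h1, h2, Finset.sum_eq_sum_Ico_succ_bot hk]
        ring
      rw [show (∑ k ∈ Finset.range e, extZ a k * (extZ s k - extZ s (k + 1)))
            = ∑ k ∈ Finset.range e, extZ a k * c' k from
          Finset.sum_congr rfl fun k hk => by rw [key k (Finset.mem_range.mp hk)],
        ← Fin.sum_univ_eq_sum_range (fun k => extZ a k * c' k) e]
      refine Finset.sum_congr rfl fun i _ => ?_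
      rw [mul_comm]
      congr 1 <;> simp [extZ, hc']
end

section
/- Let S be a numerical semigroup and let a₁, a₂ be integers with a₁ ∈ S, gcd(a₁, a₂) = 1 and a₁ + a₂ ≥ 1. Let p(X₁,X₂) = a₁X₁ + a₂X₂ and p(S) = {a₁s₁ + a₂s₂ : s₁, s₂ ∈ S, s₁ ≥ s₂}. Then S = p(S)/(a₁ + a₂), i.e., S = {x ∈ ℤ₊ : (a₁ + a₂)·x ∈ p(S)}. -/
open Finset

lemma aux_mul_mem (S : Set ℤ) (hadd : ∀ a ∈ S, ∀ b ∈ S, a + b ∈ S)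
    (s a : ℤ) (hs : s ∈ S) (ha : a ∈ S) : ∀ n : ℕ, s + a * n ∈ S := by
  intro n
  induction n with
  | zero => simpa using hs
  | succ k ih =>
    have := hadd _ ih _ ha
    have hx : s + a * (k + 1 : ℕ) = s + a * k + a := by push_cast; ring
    rwa [hx]

/-- If `a₁ ∈ S`, `gcd(a₁,a₂) = 1` and `a₁ + a₂ ≥ 1`, then for the pattern
`p(X₁,X₂) = a₁X₁ + a₂X₂` one has `S = p(S)/(a₁+a₂)`. -/
theorem stmt18 (S : Set ℤ) (hS : IsNumericalSemigroup S) (a₁ a₂ : ℤ)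
    (ha₁ : a₁ ∈ S) (hcop : Int.gcd a₁ a₂ = 1) (hsum : 1 ≤ a₁ + a₂) :
    S = {x : ℤ | 0 ≤ x ∧ (a₁ + a₂) * x ∈
      {y : ℤ | ∃ s₁ ∈ S, ∃ s₂ ∈ S, s₂ ≤ s₁ ∧ y = a₁ * s₁ + a₂ * s₂}}:= by
  obtain ⟨h0, hpos, hadd, hfin⟩ := hS
  ext x
  constructor
  · intro hx
    exact ⟨hpos x hx, x, hx, x, hx, le_refl x, by ring⟩
  · rintro ⟨hx0, s₁, hs₁, s₂, hs₂, hle, heq⟩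
    by_cases h2 : a₂ = 0
    · subst h2
      have ha1 : a₁ = 1 := by
        have := Int.natAbs_eq a₁
        have hna : a₁.natAbs = 1 := by simpa using hcop
        have := hpos a₁ ha₁
        omega
      subst ha1
      have : x = s₁ := by linarith
      rwa [this]
    · have hcop' : IsCoprime a₁ a₂ := Int.isCoprime_iff_gcd_eq_one.mpr hcop
      have hkey : a₁ * (s₁ - x) = a₂ * (x - s₂) := by ring_nf; linarith
      have hdvd : a₂ ∣ s₁ - x := by
        have : a₂ ∣ a₁ * (s₁ - x) := ⟨x - s₂, hkey⟩
        exact (hcop'.symm).dvd_of_dvd_mul_left this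
      obtain ⟨t, ht⟩ := hdvd
      have hts : x - s₂ = a₁ * t := by
        have : a₂ * (a₁ * t) = a₂ * (x - s₂) := by rw [← hkey, ht]; ring
        exact (mul_left_cancel₀ h2 this).symm
      have ht0 : 0 ≤ t := by nlinarith [hle, ht, hts]
      obtain ⟨n, rfl⟩ := Int.eq_ofNat_of_zero_le ht0
      have hmem := aux_mul_mem S hadd s₂ a₁ hs₂ ha₁ n
      have hx : x = s₂ + a₁ * (n : ℤ) := by linarith
      rwa [hx]
end

section
/- Let S be a numerical semigroup and let d ≥ 2 be an integer. Then there exist infinitely many numerical semigroups T such that S = T/d = {x ∈ ℤ₊ : dx ∈ T}; moreover, such T can all be taken of the form T = p(S) = {a₁s₁ + a₂s₂ : s₁, s₂ ∈ S, s₁ ≥ s₂} for linear patterns p(X₁,X₂) = a₁X₁ + a₂X₂ with a₁ + a₂ = d, a₁ ∈ S and gcd(a₁, a₂) = 1. -/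
open Finset

set_option linter.unusedSectionVars false

/-- The pattern image set for a length-2 pattern. -/
def Tset (S : Set ℤ) (d a : ℤ) : Set ℤ :=
  {y : ℤ | ∃ s₁ ∈ S, ∃ s₂ ∈ S, s₂ ≤ s₁ ∧ y = a * s₁ + (d - a) * s₂}

section aux

variable {S : Set ℤ} {d c a : ℤ}
variable (h0 : (0:ℤ) ∈ S) (hpos : ∀ s ∈ S, 0 ≤ s) (hadd : ∀ x ∈ S, ∀ y ∈ S, x + y ∈ S)
variable (hd : 2 ≤ d) (hc1 : 1 ≤ c) (hcS : ∀ z : ℤ, c ≤ z → z ∈ S)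
variable (haS : a ∈ S) (ham : d ∣ a - 1) (hac : c ≤ a)

include ham in
lemma key_dvd (t : ℤ) : d ∣ a * t - t := by
  have := ham.mul_right t
  rwa [sub_mul, one_mul] at this

include hpos hd hac hc1 in
lemma Tset_lb {y : ℤ} (hy : y ∈ Tset S d a) (hdy : ¬ d ∣ y) : a ≤ y := by
  obtain ⟨s₁, hs₁, s₂, hs₂, hle, rfl⟩ := hy
  rcases lt_or_eq_of_le hle with h | h
  · have h2 := hpos s₂ hs₂
    nlinarith
  · exact absurd ⟨s₂, by rw [← h]; ring⟩ hdy

include hpos hd hac hc1 hcS ham in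
lemma Tset_sep : a + d * c ∈ Tset S d a ∧ ¬ d ∣ (a + d * c) := by
  obtain ⟨m, hm⟩ := ham
  refine ⟨⟨c + 1, hcS _ (by linarith), c, hcS _ le_rfl, by linarith, by ring⟩, ?_⟩
  rintro ⟨k, hk⟩
  have h1 : d * (k - c - m) = 1 := by linear_combination hm - hk
  have := Int.le_of_dvd one_pos ⟨k - c - m, h1.symm⟩
  omega

include h0 hpos hadd hd hc1 hcS haS ham hac in
lemma Tset_ns : IsNumericalSemigroup (Tset S d a) := by
  have hapos : 0 < a := by linarith
  refine ⟨⟨0, h0, 0, h0, le_rfl, by ring⟩, ?_, ?_, ?_⟩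
  · rintro y ⟨s₁, hs₁, s₂, hs₂, hle, rfl⟩
    have := hpos s₂ hs₂
    nlinarith
  · rintro y ⟨s₁, hs₁, s₂, hs₂, hle, rfl⟩ y' ⟨t₁, ht₁, t₂, ht₂, hle', rfl⟩
    exact ⟨s₁ + t₁, hadd _ hs₁ _ ht₁, s₂ + t₂, hadd _ hs₂ _ ht₂, by linarith, by ring⟩
  · apply Set.Finite.subset (Set.finite_Icc 0 (a * (c + d) + d * c))
    rintro z ⟨hz0, hzT⟩
    refine ⟨hz0, ?_⟩
    by_contra hbig
    push_neg at hbig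
    apply hzT
    set x : ℤ := c + (z - c) % d with hx
    have hd0 : (0:ℤ) < d := by linarith
    have hx1 : c ≤ x := by
      have := Int.emod_nonneg (z - c) (by linarith : d ≠ 0)
      omega
    have hx2 : x ≤ c + d - 1 := by
      have := Int.emod_lt_of_pos (z - c) hd0
      omega
    have hzx : d ∣ z - x := by
      refine ⟨(z - c) / d, ?_⟩
      have := Int.mul_ediv_add_emod (z - c) d
      omega
    have hzax : d ∣ z - a * x := by
      have h2 := key_dvd (ham := ham) x
      have : z - a * x = (z - x) - (a * x - x) := by ring
      rw [this]
      exact hzx.sub h2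
    obtain ⟨y, hy⟩ := hzax
    have hyc : c < y := by nlinarith
    refine ⟨x + y, hcS _ (by linarith), y, hcS _ (by linarith), by linarith, ?_⟩
    linarith [hy]  -- z = a*(x+y) + (d-a)*y

end aux

section aux2

variable {S : Set ℤ} {d c a : ℤ}
variable (h0 : (0:ℤ) ∈ S) (hpos : ∀ s ∈ S, 0 ≤ s) (hadd : ∀ x ∈ S, ∀ y ∈ S, x + y ∈ S)
variable (hd : 2 ≤ d) (haS : a ∈ S) (ham : d ∣ a - 1)

include h0 hadd in
lemma mul_mem_of_nonneg : ∀ k : ℤ, 0 ≤ k → ∀ b ∈ S, k * b ∈ S := by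
  have H : ∀ b ∈ S, ∀ k : ℤ, 0 ≤ k → k * b ∈ S := by
    intro b hb k hk
    lift k to ℕ using hk
    induction k with
    | zero => simpa using h0
    | succ n ih =>
      have := hadd _ ih _ hb
      rw [show ((n+1 : ℕ) : ℤ) = (n : ℤ) + 1 by push_cast; ring, add_mul, one_mul]
      exact this
  exact fun k hk b hb => H b hb k hk

include h0 hpos hadd hd haS ham in
lemma Tset_quot : {x : ℤ | 0 ≤ x ∧ d * x ∈ Tset S d a} = S := by
  have hd0 : (0:ℤ) < d := by linarith
  ext x
  constructor
  · rintro ⟨hx0, s₁, hs₁, s₂, hs₂, hle, heq⟩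
    have hdvd : d ∣ s₁ - s₂ := by
      have h1 : d ∣ a * (s₁ - s₂) := ⟨x - s₂, by linarith⟩
      have h2 := key_dvd (ham := ham) (s₁ - s₂)
      have : s₁ - s₂ = a * (s₁ - s₂) - (a * (s₁ - s₂) - (s₁ - s₂)) := by ring
      rw [this]
      exact h1.sub h2
    obtain ⟨k, hk⟩ := hdvd
    have hk0 : 0 ≤ k := by nlinarith
    have hx : x = k * a + s₂ := by
      have hs : s₁ = d * k + s₂ := by omega
      rw [hs] at heq
      have : d * (x - (k * a + s₂)) = 0 := by linear_combination heq
      have := mul_eq_zero.mp this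
      omega
    rw [hx]
    exact hadd _ (mul_mem_of_nonneg h0 hadd k hk0 a haS) _ hs₂
  · intro hx
    exact ⟨hpos x hx, x, hx, x, hx, le_rfl, by ring⟩

end aux2

/-- Every numerical semigroup `S` is, for every integer `d ≥ 2`, the quotient by `d`
of infinitely many numerical semigroups, all of the form `p(S)` for linear patterns
`p(X₁,X₂) = a₁X₁ + a₂X₂` of length two with `a₁ + a₂ = d`, `a₁ ∈ S`, `gcd(a₁,a₂) = 1`. -/
theorem stmt19 (S : Set ℤ) (hS : IsNumericalSemigroup S) (d : ℤ) (hd : 2 ≤ d) :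
    {T : Set ℤ | IsNumericalSemigroup T ∧ {x : ℤ | 0 ≤ x ∧ d * x ∈ T} = S ∧
      ∃ a₁ a₂ : ℤ, a₁ + a₂ = d ∧ a₁ ∈ S ∧ Int.gcd a₁ a₂ = 1 ∧
        T = {y : ℤ | ∃ s₁ ∈ S, ∃ s₂ ∈ S, s₂ ≤ s₁ ∧ y = a₁ * s₁ + a₂ * s₂}}.Infinite := by
  obtain ⟨h0, hpos, hadd, hfin⟩ := hS
  obtain ⟨b, hb⟩ := hfin.bddAbove
  set c : ℤ := max b 0 + 1 with hcdef
  have hc1 : (1:ℤ) ≤ c := by have := le_max_right b 0; omega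
  have hcS : ∀ z : ℤ, c ≤ z → z ∈ S := by
    intro z hz
    by_contra hzS
    have h1 : z ≤ b := hb ⟨by omega, hzS⟩
    have h2 := le_max_left b 0
    omega
  set A : ℕ → ℤ := fun n => 1 + d * (c + (c + 1) * n) with hAdef
  have hAc : ∀ n, c ≤ A n := by
    intro n
    have hn : (0:ℤ) ≤ (n:ℤ) := Int.natCast_nonneg n
    simp only [hAdef]
    have h1 : (0:ℤ) ≤ (d-2)*c := mul_nonneg (by linarith) (by linarith)
    have h2 : (0:ℤ) ≤ d*((c+1)*n) := mul_nonneg (by linarith) (mul_nonneg (by linarith) hn)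
    nlinarith [h1, h2]
  have hAm : ∀ n, d ∣ A n - 1 := fun n => ⟨c + (c+1)*n, by simp only [hAdef]; ring⟩
  have hmono : ∀ {n m : ℕ}, n < m → A n + d * c < A m := by
    intro n m hnm
    have h1 : (n:ℤ) + 1 ≤ (m:ℤ) := by exact_mod_cast hnm
    simp only [hAdef]
    have h2 : (0:ℤ) ≤ d*((c+1)*((m:ℤ)-n-1)) :=
      mul_nonneg (by linarith) (mul_nonneg (by linarith) (by linarith))
    nlinarith [h2]
  refine Set.infinite_of_injective_forall_mem
    (f := fun n : ℕ => Tset S d (A n)) ?_ ?_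
  · intro n m hnm
    by_contra hne
    simp only at hnm
    rcases Nat.lt_or_ge n m with h | h
    · have hsep := Tset_sep (hpos := hpos) (hd := hd) (hc1 := hc1) (hcS := hcS)
        (ham := hAm n) (hac := hAc n)
      have h1 : A n + d * c ∈ Tset S d (A m) := hnm ▸ hsep.1
      have h2 := Tset_lb (hpos := hpos) (hd := hd) (hc1 := hc1) (hac := hAc m) h1 hsep.2
      exact absurd (hmono h) (not_lt.mpr h2)
    · have h' : m < n := by omega
      have hsep := Tset_sep (hpos := hpos) (hd := hd) (hc1 := hc1) (hcS := hcS)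
        (ham := hAm m) (hac := hAc m)
      have h1 : A m + d * c ∈ Tset S d (A n) := hnm ▸ hsep.1
      have h2 := Tset_lb (hpos := hpos) (hd := hd) (hc1 := hc1) (hac := hAc n) h1 hsep.2
      exact absurd (hmono h') (not_lt.mpr h2)
  · intro n
    refine ⟨Tset_ns (h0 := h0) (hpos := hpos) (hadd := hadd) (hd := hd) (hc1 := hc1)
        (hcS := hcS) (haS := hcS _ (hAc n)) (ham := hAm n) (hac := hAc n),
      Tset_quot (h0 := h0) (hpos := hpos) (hadd := hadd) (hd := hd)
        (haS := hcS _ (hAc n)) (ham := hAm n),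
      A n, d - A n, by ring, hcS _ (hAc n), ?_, rfl⟩
    obtain ⟨m, hm⟩ := hAm n
    rw [← Int.isCoprime_iff_gcd_eq_one]
    exact ⟨1 - m, -m, by linear_combination hm⟩
end
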